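/- arXiv:2002.09338 — 5 statements merged into one kernel-verified Lean document; each statement's English description precedes it below -/
import Mathlib

section
/- Let d ≥ 1, x ∈ ℝ^d, y ∈ ℝ, β ∈ ℝ^d be fixed, and let δ be a random vector in {0,1}^d with independent coordinates δ_j ~ Bernoulli(p_j), p_j ∈ (0,1]. Set P = diag(p_1,…,p_d), x̃ = x ⊙ δ, and define the debiased gradient g̃(β) = P⁻¹ x̃ (x̃ᵀ P⁻¹ β − y) − (I − P) P⁻² diag(x̃ x̃ᵀ) β. Then E_δ[g̃(β)] = x xᵀ β − x y, the gradient at β of the quadratic loss β ↦ ½(xᵀβ − y)². -/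
/-- The probability that an independent Bernoulli mask `δ` (with `δ_j ~ Bernoulli(p_j)`)
equals a given pattern `η ∈ {0,1}^d`. -/
def maskWeight {d : ℕ} (p : Fin d → ℝ) (η : Fin d → Bool) : ℝ :=
  ∏ j, if η j then p j else 1 - p j

/-- The zero-imputed vector `x̃ = x ⊙ δ` for mask pattern `η`. -/
def maskedVec {d : ℕ} (x : Fin d → ℝ) (η : Fin d → Bool) : Fin d → ℝ :=
  fun j => x j * (if η j then 1 else 0)

/-- The debiased gradient
`g̃(β) = P⁻¹ x̃ (x̃ᵀ P⁻¹ β − y) − (I − P) P⁻² diag(x̃ x̃ᵀ) β` for mask pattern `η`,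
where `x̃ = x ⊙ η`, `P = diag(p)` and `P⁻¹ = diag(p_j⁻¹)`. -/
noncomputable def debiasedGrad {d : ℕ} (p x : Fin d → ℝ) (y : ℝ) (β : Fin d → ℝ)
    (η : Fin d → Bool) : Fin d → ℝ :=
  ((∑ j, maskedVec x η j * ((p j)⁻¹ * β j)) - y) •
      (Matrix.diagonal fun j => (p j)⁻¹).mulVec (maskedVec x η) -
    ((1 - Matrix.diagonal p) * (Matrix.diagonal fun j => (p j)⁻¹) *
        (Matrix.diagonal fun j => (p j)⁻¹) *
        (Matrix.diagonal fun j => (maskedVec x η j) ^ 2)).mulVec β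

open Finset in
lemma bern_master {d : ℕ} (p : Fin d → ℝ) (m : Fin d → Bool → ℝ) :
    ∑ η : Fin d → Bool, maskWeight p η * ∏ j, m j (η j)
      = ∏ j, (p j * m j true + (1 - p j) * m j false) := by
  have h : ∀ η : Fin d → Bool, maskWeight p η * ∏ j, m j (η j)
      = ∏ j, ((if η j then p j else 1 - p j) * m j (η j)) := by
    intro η
    rw [maskWeight, ← Finset.prod_mul_distrib]
  simp_rw [h]
  have key := Finset.prod_univ_sum (fun _ : Fin d => (univ : Finset Bool))
      (fun j b => (if b then p j else 1 - p j) * m j b)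
  rw [Fintype.piFinset_univ] at key
  rw [← key]
  congr 1; funext j
  rw [Fintype.sum_bool]
  simp

open Finset in
lemma bern_Eprod {d : ℕ} (p : Fin d → ℝ) (S : Finset (Fin d)) :
    ∑ η : Fin d → Bool, maskWeight p η * ∏ j ∈ S, (if η j then (1:ℝ) else 0)
      = ∏ j ∈ S, p j := by
  have h := bern_master p (fun j b => if j ∈ S then (if b then (1:ℝ) else 0) else 1)
  have h2 : ∀ η : Fin d → Bool,
      (∏ j, (if j ∈ S then (if η j then (1:ℝ) else 0) else 1))
        = ∏ j ∈ S, (if η j then (1:ℝ) else 0) := by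
    intro η
    rw [Finset.prod_ite_mem, univ_inter]
  simp only [h2] at h
  rw [h]
  have h3 : ∀ j : Fin d, (p j * (if j ∈ S then (if true = true then (1:ℝ) else 0) else 1)
      + (1 - p j) * (if j ∈ S then (if false = true then (1:ℝ) else 0) else 1))
      = if j ∈ S then p j else 1 := by
    intro j; by_cases hj : j ∈ S <;> simp [hj]
  simp only [if_true] at h3 ⊢
  simp only [h3]
  rw [Finset.prod_ite_mem, univ_inter]

lemma bern_E1 {d : ℕ} (p : Fin d → ℝ) (i : Fin d) :
    ∑ η : Fin d → Bool, maskWeight p η * (if η i then (1:ℝ) else 0) = p i := by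
  have := bern_Eprod p {i}
  simpa using this

lemma bern_E2 {d : ℕ} (p : Fin d → ℝ) {i j : Fin d} (h : j ≠ i) :
    ∑ η : Fin d → Bool, maskWeight p η *
      ((if η j then (1:ℝ) else 0) * (if η i then (1:ℝ) else 0)) = p j * p i := by
  have hE := bern_Eprod p {j, i}
  simp only [Finset.prod_pair h] at hE
  exact hE

lemma comp (d : ℕ) (x p : Fin d → ℝ) (y : ℝ) (β : Fin d → ℝ) (η : Fin d → Bool) (i : Fin d) :
    debiasedGrad p x y β η i =
      (∑ j, (x j * (if η j then (1:ℝ) else 0)) * ((p j)⁻¹ * β j) - y) *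
          ((p i)⁻¹ * (x i * (if η i then (1:ℝ) else 0))) -
        (1 - p i) * ((p i)⁻¹ * ((p i)⁻¹ * ((x i * (if η i then (1:ℝ) else 0)) ^ 2 * β i))) := by
  simp only [debiasedGrad, maskedVec, Pi.sub_apply, Pi.smul_apply, smul_eq_mul,
    Matrix.mulVec_diagonal, ← Matrix.diagonal_one, Matrix.sub_mul,
    Matrix.diagonal_mul_diagonal, Matrix.sub_mulVec, one_mul]
  ring

/-- for fixed `x ∈ ℝ^d`, `y ∈ ℝ`, `β ∈ ℝ^d` and a random mask with
independent coordinates `δ_j ~ Bernoulli(p_j)`, `p_j ∈ (0,1]`, the debiased gradient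
satisfies `E_δ[g̃(β)] = x xᵀ β − x y`, the gradient at `β` of `β ↦ ½(xᵀβ − y)²`. -/
theorem stmt_1 (d : ℕ) (hd : 1 ≤ d) (x p : Fin d → ℝ) (y : ℝ) (β : Fin d → ℝ)
    (hp : ∀ j, 0 < p j ∧ p j ≤ 1) :
    (∑ η : Fin d → Bool, maskWeight p η • debiasedGrad p x y β η) =
      (Matrix.of fun i j => x i * x j).mulVec β - y • x := by
  funext i
  have hpi : p i ≠ 0 := (hp i).1.ne'
  have hb : ∀ (η : Fin d → Bool) (k : Fin d),
      (if η k then (1:ℝ) else 0) * (if η k then (1:ℝ) else 0)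
        = (if η k then (1:ℝ) else 0) := by
    intro η k; by_cases h : η k <;> simp [h]
  -- rewrite the LHS component
  have hsum : (∑ η : Fin d → Bool, maskWeight p η • debiasedGrad p x y β η) i
      = ∑ η : Fin d → Bool,
          ((∑ j, (x j * ((p j)⁻¹ * β j) * ((p i)⁻¹ * x i)) *
              (maskWeight p η * ((if η j then (1:ℝ) else 0) * (if η i then (1:ℝ) else 0))))
            - (y * ((p i)⁻¹ * x i)) * (maskWeight p η * (if η i then (1:ℝ) else 0))
            - ((1 - p i) * ((p i)⁻¹ * ((p i)⁻¹ * (x i ^ 2 * β i)))) *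
                (maskWeight p η * (if η i then (1:ℝ) else 0))) := by
    rw [Finset.sum_apply]
    refine Finset.sum_congr rfl fun η _ => ?_
    rw [Pi.smul_apply, smul_eq_mul, comp]
    have hbsq : ∀ (η : Fin d → Bool) (k : Fin d),
        ((if η k then (1:ℝ) else 0)) ^ 2 = (if η k then (1:ℝ) else 0) := by
      intro η k; by_cases h : η k <;> simp [h]
    simp only [mul_pow, hbsq, mul_sub, sub_mul, Finset.sum_mul, Finset.mul_sum, sub_sub]
    congr 1
    · exact Finset.sum_congr rfl fun j _ => by ring
    · ring
  rw [hsum, Finset.sum_sub_distrib, Finset.sum_sub_distrib, Finset.sum_comm]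
  simp_rw [← Finset.mul_sum]
  rw [bern_E1]
  have hterm : ∀ j : Fin d,
      (x j * ((p j)⁻¹ * β j) * ((p i)⁻¹ * x i)) *
          (∑ η : Fin d → Bool, maskWeight p η *
            ((if η j then (1:ℝ) else 0) * (if η i then (1:ℝ) else 0)))
        = x i * x j * β j + (if j = i then x i ^ 2 * ((p i)⁻¹ - 1) * β i else 0) := by
    intro j
    by_cases h : j = i
    · subst h
      simp_rw [hb]
      rw [bern_E1]
      simp only [if_pos trivial]
      field_simp
      ring
    · rw [bern_E2 p h, if_neg h]
      have hpj : p j ≠ 0 := (hp j).1.ne'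
      field_simp
      ring
  rw [Finset.sum_congr rfl fun j _ => hterm j, Finset.sum_add_distrib,
    Finset.sum_ite_eq' Finset.univ i]
  simp only [Finset.mem_univ, if_true, Pi.sub_apply, Pi.smul_apply, smul_eq_mul,
    Matrix.mulVec, dotProduct, Matrix.of_apply]
  field_simp
  ring
end

section
/- Let (X, ε, δ) be random with values in ℝ^d × ℝ × {0,1}^d such that: ε is independent of X with E[ε] = 0 and E[ε²] < ∞; δ has independent coordinates δ_j ~ Bernoulli(p_j) with p_j ∈ (0,1] and is independent of (X, ε); and E[‖X‖²] < ∞. Let y = Xᵀβ* + ε for a fixed β* ∈ ℝ^d, P = diag(p_1,…,p_d), X̃ = X ⊙ δ, and g̃(β*) = P⁻¹ X̃ (X̃ᵀ P⁻¹ β* − y) − (I − P) P⁻² diag(X̃ X̃ᵀ) β*. If β* minimizes the risk R(β) = ½ E[(Xᵀβ − y)²], then E[g̃(β*)] = 0. -/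
open MeasureTheory ProbabilityTheory Finset
lemma bern_sum (d : ℕ) (p : Fin d → ℝ) (s : Finset (Fin d)) :
    ∑ η : Fin d → Bool, (∏ k, if η k then p k else 1 - p k) *
      (∏ k ∈ s, if η k then (1:ℝ) else 0) = ∏ k ∈ s, p k := by
  classical
  have key : ∀ η : Fin d → Bool,
      (∏ k, if η k then p k else 1 - p k) * (∏ k ∈ s, if η k then (1:ℝ) else 0)
      = ∏ k, ((if η k then p k else 1 - p k) *
          (if k ∈ s then (if η k then (1:ℝ) else 0) else 1)) := by
    intro η
    rw [Finset.prod_mul_distrib]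
    congr 1
    rw [Finset.prod_ite_mem, Finset.univ_inter]
  simp only [key]
  rw [← Fintype.prod_sum (κ := fun _ : Fin d => Bool) (f := fun k b => (if b then p k else 1 - p k) * (if k ∈ s then (if b then (1:ℝ) else 0) else 1))]
  have : ∀ k, (∑ b : Bool, ((if b then p k else 1 - p k) *
      (if k ∈ s then (if b then (1:ℝ) else 0) else 1))) = if k ∈ s then p k else 1 := by
    intro k
    rw [Fintype.sum_bool]
    by_cases hk : k ∈ s <;> simp [hk]
  simp only [this]
  rw [Finset.prod_ite_mem, Finset.univ_inter]

lemma Edelta (d : ℕ) {Ω : Type*} [MeasurableSpace Ω] (μ : Measure Ω) [IsProbabilityMeasure μ]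
    (δ : Ω → Fin d → Bool) (hδm : Measurable δ) (p : Fin d → ℝ) (hp : ∀ j, 0 < p j ∧ p j ≤ 1)
    (hδlaw : ∀ η : Fin d → Bool,
      μ {ω | δ ω = η} = ENNReal.ofReal (∏ j, if η j then p j else 1 - p j))
    (h : (Fin d → Bool) → ℝ) :
    ∫ ω, h (δ ω) ∂μ = ∑ η, (∏ j, if η j then p j else 1 - p j) * h η := by
  have hmap : IsProbabilityMeasure (μ.map δ) := Measure.isProbabilityMeasure_map hδm.aemeasurable
  rw [← integral_map hδm.aemeasurable (measurable_of_countable h).aestronglyMeasurable]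
  rw [integral_fintype (.of_finite)]
  refine Finset.sum_congr rfl fun η _ => ?_
  have hpre : δ ⁻¹' {η} = {ω | δ ω = η} := rfl
  rw [measureReal_def, Measure.map_apply hδm (measurableSet_singleton η), hpre, hδlaw η,
    ENNReal.toReal_ofReal, smul_eq_mul]
  exact Finset.prod_nonneg fun j _ => by
    by_cases hj : η j <;> simp [hj] <;> linarith [(hp j).1, (hp j).2]

lemma Eind2 (d : ℕ) {Ω : Type*} [MeasurableSpace Ω] (μ : Measure Ω) [IsProbabilityMeasure μ]
    (δ : Ω → Fin d → Bool) (hδm : Measurable δ) (p : Fin d → ℝ) (hp : ∀ j, 0 < p j ∧ p j ≤ 1)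
    (hδlaw : ∀ η : Fin d → Bool,
      μ {ω | δ ω = η} = ENNReal.ofReal (∏ j, if η j then p j else 1 - p j))
    (a b : Fin d) :
    ∫ ω, (if δ ω a then (1:ℝ) else 0) * (if δ ω b then (1:ℝ) else 0) ∂μ
      = ∏ k ∈ ({a, b} : Finset (Fin d)), p k := by
  classical
  have hpt : ∀ η : Fin d → Bool, (if η a then (1:ℝ) else 0) * (if η b then (1:ℝ) else 0)
      = ∏ k ∈ ({a, b} : Finset (Fin d)), if η k then (1:ℝ) else 0 := by
    intro η
    by_cases hab : a = b
    · subst hab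
      simp only [Finset.pair_eq_singleton, Finset.prod_singleton]
      by_cases ha : η a <;> simp [ha]
    · rw [Finset.prod_pair hab]
  have : (fun ω => (if δ ω a then (1:ℝ) else 0) * (if δ ω b then (1:ℝ) else 0))
      = fun ω => (fun η : Fin d → Bool => ∏ k ∈ ({a, b} : Finset (Fin d)), if η k then (1:ℝ) else 0) (δ ω) := by
    funext ω; exact hpt (δ ω)
  rw [this, Edelta d μ δ hδm p hp hδlaw
    (fun η => ∏ k ∈ ({a, b} : Finset (Fin d)), if η k then (1:ℝ) else 0), bern_sum]

lemma Eind1 (d : ℕ) {Ω : Type*} [MeasurableSpace Ω] (μ : Measure Ω) [IsProbabilityMeasure μ]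
    (δ : Ω → Fin d → Bool) (hδm : Measurable δ) (p : Fin d → ℝ) (hp : ∀ j, 0 < p j ∧ p j ≤ 1)
    (hδlaw : ∀ η : Fin d → Bool,
      μ {ω | δ ω = η} = ENNReal.ofReal (∏ j, if η j then p j else 1 - p j))
    (a : Fin d) :
    ∫ ω, (if δ ω a then (1:ℝ) else 0) ∂μ = p a := by
  classical
  have : (fun ω => (if δ ω a then (1:ℝ) else 0))
      = fun ω => (fun η : Fin d → Bool => ∏ k ∈ ({a} : Finset (Fin d)), if η k then (1:ℝ) else 0) (δ ω) := by
    funext ω; simp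
  rw [this, Edelta d μ δ hδm p hp hδlaw
    (fun η => ∏ k ∈ ({a} : Finset (Fin d)), if η k then (1:ℝ) else 0), bern_sum,
    Finset.prod_singleton]

lemma fact_int (d : ℕ) {Ω : Type*} [MeasurableSpace Ω] (μ : Measure Ω)
    (X : Ω → EuclideanSpace ℝ (Fin d)) (ε : Ω → ℝ) (δ : Ω → Fin d → Bool)
    (hXmeas : Measurable X) (hεm : Measurable ε) (hδm : Measurable δ)
    (hδindep : IndepFun (fun ω => (X ω, ε ω)) δ μ)
    (f : EuclideanSpace ℝ (Fin d) × ℝ → ℝ) (hf : Measurable f) (h : (Fin d → Bool) → ℝ) :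
    ∫ ω, f (X ω, ε ω) * h (δ ω) ∂μ = (∫ ω, f (X ω, ε ω) ∂μ) * ∫ ω, h (δ ω) ∂μ := by
  have hind : IndepFun (fun ω => f (X ω, ε ω)) (fun ω => h (δ ω)) μ :=
    hδindep.comp hf (measurable_of_countable h)
  exact hind.integral_fun_mul_eq_mul_integral ((hf.comp (hXmeas.prodMk hεm)).aestronglyMeasurable)
    (((measurable_of_countable h).comp hδm).aestronglyMeasurable)

lemma coord_abs_le (d : ℕ) (x : EuclideanSpace ℝ (Fin d)) (j : Fin d) : |x j| ≤ ‖x‖ := by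
  have h1 : |x j| = Real.sqrt ((x j)^2) := (Real.sqrt_sq_eq_abs _).symm
  rw [h1, EuclideanSpace.norm_eq]
  apply Real.sqrt_le_sqrt
  have := Finset.single_le_sum (f := fun k => ‖x k‖^2)
    (fun k _ => by positivity) (Finset.mem_univ j)
  simpa [Real.norm_eq_abs, sq_abs] using this

lemma int_mul_ind {Ω : Type*} [MeasurableSpace Ω] (μ : Measure Ω) (F G : Ω → ℝ)
    (hF : Integrable F μ) (hG : Measurable G) (hbd : ∀ ω, |G ω| ≤ 1) :
    Integrable (fun ω => F ω * G ω) μ := by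
  apply Integrable.mono' hF.abs (hF.aestronglyMeasurable.mul hG.aestronglyMeasurable)
  filter_upwards with ω
  simp only [Pi.mul_apply, Real.norm_eq_abs, abs_mul]
  exact mul_le_of_le_one_right (abs_nonneg _) (hbd ω)

/-- Let `(X, ε, δ)` be random with `ε ⟂ X`, `E[ε] = 0`, `E[ε²] < ∞`,
`δ` an independent-coordinates Bernoulli mask (parameters `p_j ∈ (0,1]`) independent of
`(X, ε)`, and `E[‖X‖²] < ∞`.  With `y = Xᵀβ* + ε`, `P = diag(p)`, `X̃ = X ⊙ δ`, and
`g̃(β*) = P⁻¹ X̃ (X̃ᵀ P⁻¹ β* − y) − (I − P) P⁻² diag(X̃ X̃ᵀ) β*`, if `β*` minimizes the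
risk `R(β) = ½ E[(Xᵀβ − y)²]` then `E[g̃(β*)] = 0`. -/
theorem stmt_2 (d : ℕ) (hd : 1 ≤ d)
    {Ω : Type*} [MeasurableSpace Ω] (μ : Measure Ω) [IsProbabilityMeasure μ]
    (X : Ω → EuclideanSpace ℝ (Fin d)) (ε : Ω → ℝ) (δ : Ω → Fin d → Bool)
    (hXm : ∀ j, Measurable fun ω => X ω j) (hεm : Measurable ε) (hδm : Measurable δ)
    (hεX : IndepFun X ε μ)
    (hε0 : ∫ ω, ε ω ∂μ = 0)
    (hε2 : Integrable (fun ω => (ε ω) ^ 2) μ)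
    (p : Fin d → ℝ) (hp : ∀ j, 0 < p j ∧ p j ≤ 1)
    (hδlaw : ∀ η : Fin d → Bool,
      μ {ω | δ ω = η} = ENNReal.ofReal (∏ j, if η j then p j else 1 - p j))
    (hδindep : IndepFun (fun ω => (X ω, ε ω)) δ μ)
    (hX2 : Integrable (fun ω => ‖X ω‖ ^ 2) μ)
    (βs : EuclideanSpace ℝ (Fin d))
    (y : Ω → ℝ) (hy : ∀ ω, y ω = (∑ j, X ω j * βs j) + ε ω)
    (R : EuclideanSpace ℝ (Fin d) → ℝ)
    (hR : ∀ β, R β = (1 / 2) * ∫ ω, ((∑ j, X ω j * β j) - y ω) ^ 2 ∂μ)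
    (hmin : ∀ β, R βs ≤ R β)
    (g : Ω → Fin d → ℝ)
    (hg : ∀ ω, g ω =
      ((∑ j, (X ω j * (if δ ω j then 1 else 0)) * ((p j)⁻¹ * βs j)) - y ω) •
          (Matrix.diagonal fun j => (p j)⁻¹).mulVec (fun j => X ω j * (if δ ω j then 1 else 0)) -
        ((1 - Matrix.diagonal p) * (Matrix.diagonal fun j => (p j)⁻¹) *
            (Matrix.diagonal fun j => (p j)⁻¹) *
            (Matrix.diagonal fun j => (X ω j * (if δ ω j then 1 else 0)) ^ 2)).mulVec
          (fun j => βs j)) :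
    ∀ i, ∫ ω, g ω i ∂μ = 0 := by
  classical
  intro i
  have hgpt : ∀ ω, g ω i
      = (∑ j, ((p j)⁻¹ * βs j * (p i)⁻¹) * ((X ω j * X ω i) *
          ((if δ ω j then (1:ℝ) else 0) * (if δ ω i then (1:ℝ) else 0))))
      - (p i)⁻¹ * ((y ω * X ω i) * (if δ ω i then (1:ℝ) else 0))
      - ((1 - p i) * (p i)⁻¹ * (p i)⁻¹ * βs i) *
          ((X ω i * X ω i) * (if δ ω i then (1:ℝ) else 0)) := by
    intro ω
    rw [hg]
    simp only [Pi.sub_apply, Pi.smul_apply, smul_eq_mul, ← Matrix.diagonal_one,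
      Matrix.diagonal_sub, Matrix.diagonal_mul_diagonal, Matrix.mulVec_diagonal]
    rw [sub_mul, Finset.sum_mul]
    have hsq : (if δ ω i then (1:ℝ) else 0) * (if δ ω i then (1:ℝ) else 0)
        = (if δ ω i then (1:ℝ) else 0) := by by_cases hb : δ ω i <;> simp [hb]
    congr 1
    · congr 1
      · refine Finset.sum_congr rfl fun j _ => ?_
        by_cases hj : δ ω j <;> by_cases hb : δ ω i <;> simp [hj, hb] <;> ring
      · by_cases hb : δ ω i <;> simp [hb] <;> ring
    · by_cases hb : δ ω i <;> simp [hb] <;> ring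
  -- basic facts
  have hpne : ∀ j, p j ≠ 0 := fun j => ne_of_gt (hp j).1
  have hXmeas : Measurable X := (WithLp.measurable_toLp 2 (Fin d → ℝ)).comp (measurable_pi_iff.mpr hXm)
  have hindm : ∀ k, Measurable (fun ω => (if δ ω k then (1:ℝ) else 0)) := fun k =>
    (measurable_of_countable (fun b : Bool => if b then (1:ℝ) else 0)).comp
      ((measurable_pi_apply k).comp hδm)
  have hind_bd : ∀ k ω, |(if δ ω k then (1:ℝ) else 0)| ≤ 1 := by
    intro k ω; by_cases hb : δ ω k <;> simp [hb]
  have hXXint : ∀ j k, Integrable (fun ω => X ω j * X ω k) μ := by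
    intro j k
    refine hX2.mono' ((hXm j).mul (hXm k)).aestronglyMeasurable ?_
    filter_upwards with ω
    rw [Real.norm_eq_abs, abs_mul]
    calc |X ω j| * |X ω k| ≤ ‖X ω‖ * ‖X ω‖ :=
          mul_le_mul (coord_abs_le d _ j) (coord_abs_le d _ k) (abs_nonneg _) (norm_nonneg _)
      _ = ‖X ω‖ ^ 2 := (sq (‖X ω‖)).symm
  have hXint : ∀ j, Integrable (fun ω => X ω j) μ := by
    intro j
    refine ((integrable_const (1:ℝ)).add hX2).mono' (hXm j).aestronglyMeasurable ?_
    filter_upwards with ω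
    rw [Real.norm_eq_abs]
    simp only [Pi.add_apply]
    have h1 : |X ω j| ≤ ‖X ω‖ := coord_abs_le d _ j
    nlinarith [norm_nonneg (X ω), sq_nonneg (‖X ω‖ - 1)]
  have hεint : Integrable ε μ := by
    refine ((integrable_const (1:ℝ)).add hε2).mono' hεm.aestronglyMeasurable ?_
    filter_upwards with ω
    simp only [Pi.add_apply]
    rw [Real.norm_eq_abs]
    nlinarith [abs_nonneg (ε ω), sq_abs (ε ω), sq_nonneg (|ε ω| - 1)]
  have hεXi : IndepFun ε (fun ω => X ω i) μ :=
    hεX.symm.comp measurable_id ((measurable_pi_apply i).comp (WithLp.measurable_ofLp 2 (Fin d → ℝ)))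
  have hεXint : Integrable (fun ω => ε ω * X ω i) μ :=
    hεXi.integrable_mul hεint (hXint i)
  have hεX0 : ∫ ω, ε ω * X ω i ∂μ = 0 := by
    have h := hεXi.integral_fun_mul_eq_mul_integral hεm.aestronglyMeasurable (hXm i).aestronglyMeasurable
    rw [h, hε0, zero_mul]
  have hyXfun : (fun ω => y ω * X ω i) = fun ω => (∑ j, βs j * (X ω j * X ω i)) + ε ω * X ω i := by
    funext ω
    rw [hy ω, add_mul, Finset.sum_mul]
    congr 1
    exact Finset.sum_congr rfl fun j _ => by ring
  have hsumint : Integrable (fun ω => ∑ j, βs j * (X ω j * X ω i)) μ :=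
    integrable_finset_sum _ fun j _ => (hXXint j i).const_mul _
  have hyXint : Integrable (fun ω => y ω * X ω i) μ := by
    rw [hyXfun]; exact hsumint.add hεXint
  have hyX : ∫ ω, y ω * X ω i ∂μ = ∑ j, βs j * ∫ ω, X ω j * X ω i ∂μ := by
    rw [hyXfun, integral_add hsumint hεXint, hεX0, add_zero,
      integral_finset_sum _ (fun j _ => (hXXint j i).const_mul _)]
    exact Finset.sum_congr rfl fun j _ => integral_const_mul _ _
  -- generic integrability for terms
  have key : ∀ (c : ℝ) (F G : Ω → ℝ), Integrable F μ → Measurable G → (∀ ω, |G ω| ≤ 1) →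
      Integrable (fun ω => c * (F ω * G ω)) μ := by
    intro c F G hF hG hbd
    have h : (fun ω => c * (F ω * G ω)) = fun ω => (c * F ω) * G ω := by funext ω; ring
    rw [h]
    exact int_mul_ind μ _ _ (hF.const_mul c) hG hbd
  have keyval : ∀ (c : ℝ) (f : EuclideanSpace ℝ (Fin d) × ℝ → ℝ), Measurable f →
      ∀ h : (Fin d → Bool) → ℝ,
      ∫ ω, c * (f (X ω, ε ω) * h (δ ω)) ∂μ
        = c * ((∫ ω, f (X ω, ε ω) ∂μ) * ∫ ω, h (δ ω) ∂μ) := by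
    intro c f hf h
    rw [integral_const_mul, fact_int d μ X ε δ hXmeas hεm hδm hδindep f hf h]
  -- indicator products bounded/measurable
  have hGm : ∀ j, Measurable (fun ω => (if δ ω j then (1:ℝ) else 0) * (if δ ω i then (1:ℝ) else 0)) :=
    fun j => (hindm j).mul (hindm i)
  have hGbd : ∀ j ω, |(if δ ω j then (1:ℝ) else 0) * (if δ ω i then (1:ℝ) else 0)| ≤ 1 := by
    intro j ω
    rw [abs_mul]
    exact mul_le_one₀ (hind_bd j ω) (abs_nonneg _) (hind_bd i ω)
  -- integrability of the three kinds of terms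
  have it1 : ∀ j, Integrable (fun ω => ((p j)⁻¹ * βs j * (p i)⁻¹) * ((X ω j * X ω i) *
      ((if δ ω j then (1:ℝ) else 0) * (if δ ω i then (1:ℝ) else 0)))) μ :=
    fun j => key _ _ _ (hXXint j i) (hGm j) (hGbd j)
  have it2 : Integrable (fun ω => (p i)⁻¹ * ((y ω * X ω i) * (if δ ω i then (1:ℝ) else 0))) μ :=
    key _ _ _ hyXint (hindm i) (hind_bd i)
  have it3 : Integrable (fun ω => ((1 - p i) * (p i)⁻¹ * (p i)⁻¹ * βs i) *
      ((X ω i * X ω i) * (if δ ω i then (1:ℝ) else 0))) μ :=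
    key _ _ _ (hXXint i i) (hindm i) (hind_bd i)
  -- split the integral
  have hsplit : ∫ ω, g ω i ∂μ
      = (∑ j, ∫ ω, ((p j)⁻¹ * βs j * (p i)⁻¹) * ((X ω j * X ω i) *
          ((if δ ω j then (1:ℝ) else 0) * (if δ ω i then (1:ℝ) else 0))) ∂μ)
        - (∫ ω, (p i)⁻¹ * ((y ω * X ω i) * (if δ ω i then (1:ℝ) else 0)) ∂μ)
        - ∫ ω, ((1 - p i) * (p i)⁻¹ * (p i)⁻¹ * βs i) *
            ((X ω i * X ω i) * (if δ ω i then (1:ℝ) else 0)) ∂μ := by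
    have itsum : Integrable (fun ω => ∑ j, ((p j)⁻¹ * βs j * (p i)⁻¹) * ((X ω j * X ω i) *
        ((if δ ω j then (1:ℝ) else 0) * (if δ ω i then (1:ℝ) else 0)))) μ :=
      integrable_finset_sum _ fun j _ => it1 j
    have itsub : Integrable (fun ω => (∑ j, ((p j)⁻¹ * βs j * (p i)⁻¹) * ((X ω j * X ω i) *
        ((if δ ω j then (1:ℝ) else 0) * (if δ ω i then (1:ℝ) else 0))))
        - (p i)⁻¹ * ((y ω * X ω i) * (if δ ω i then (1:ℝ) else 0))) μ := itsum.sub it2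
    rw [integral_congr_ae (Filter.Eventually.of_forall hgpt)]
    rw [integral_sub itsub it3, integral_sub itsum it2,
      integral_finset_sum _ fun j _ => it1 j]
  -- value of the first kind
  have e1 : ∀ j, ∫ ω, ((p j)⁻¹ * βs j * (p i)⁻¹) * ((X ω j * X ω i) *
      ((if δ ω j then (1:ℝ) else 0) * (if δ ω i then (1:ℝ) else 0))) ∂μ
      = ((p j)⁻¹ * βs j * (p i)⁻¹) * ((∫ ω, X ω j * X ω i ∂μ) * ∏ k ∈ ({j, i} : Finset (Fin d)), p k) := by
    intro j
    have h := keyval ((p j)⁻¹ * βs j * (p i)⁻¹) (fun q => q.1 j * q.1 i)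
      ((((measurable_pi_apply j).comp (WithLp.measurable_ofLp 2 (Fin d → ℝ))).comp measurable_fst).mul
        (((measurable_pi_apply i).comp (WithLp.measurable_ofLp 2 (Fin d → ℝ))).comp measurable_fst))
      (fun η => (if η j then (1:ℝ) else 0) * (if η i then (1:ℝ) else 0))
    simp only at h
    rw [h, Eind2 d μ δ hδm p hp hδlaw j i]
  -- value of the second kind
  have e2 : ∫ ω, (p i)⁻¹ * ((y ω * X ω i) * (if δ ω i then (1:ℝ) else 0)) ∂μ
      = (p i)⁻¹ * ((∫ ω, y ω * X ω i ∂μ) * p i) := by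
    have hrw : (fun ω => (p i)⁻¹ * ((y ω * X ω i) * (if δ ω i then (1:ℝ) else 0)))
        = fun ω => (p i)⁻¹ * ((((∑ j, X ω j * βs j) + ε ω) * X ω i) * (if δ ω i then (1:ℝ) else 0)) := by
      funext ω; rw [hy ω]
    have hrw2 : (fun ω => y ω * X ω i) = fun ω => ((∑ j, X ω j * βs j) + ε ω) * X ω i := by
      funext ω; rw [hy ω]
    rw [hrw, hrw2]
    have h := keyval ((p i)⁻¹) (fun q => ((∑ j, q.1 j * βs j) + q.2) * q.1 i)
      (((Finset.univ.measurable_sum fun j _ =>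
          (((measurable_pi_apply j).comp (WithLp.measurable_ofLp 2 (Fin d → ℝ))).comp measurable_fst).mul_const (βs j)).add
        measurable_snd).mul (((measurable_pi_apply i).comp (WithLp.measurable_ofLp 2 (Fin d → ℝ))).comp measurable_fst))
      (fun η => (if η i then (1:ℝ) else 0))
    simp only at h
    rw [h, Eind1 d μ δ hδm p hp hδlaw i]
  -- value of the third kind
  have e3 : ∫ ω, ((1 - p i) * (p i)⁻¹ * (p i)⁻¹ * βs i) *
      ((X ω i * X ω i) * (if δ ω i then (1:ℝ) else 0)) ∂μ
      = ((1 - p i) * (p i)⁻¹ * (p i)⁻¹ * βs i) * ((∫ ω, X ω i * X ω i ∂μ) * p i) := by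
    have h := keyval ((1 - p i) * (p i)⁻¹ * (p i)⁻¹ * βs i) (fun q => q.1 i * q.1 i)
      ((((measurable_pi_apply i).comp (WithLp.measurable_ofLp 2 (Fin d → ℝ))).comp measurable_fst).mul
        (((measurable_pi_apply i).comp (WithLp.measurable_ofLp 2 (Fin d → ℝ))).comp measurable_fst))
      (fun η => (if η i then (1:ℝ) else 0))
    simp only at h
    rw [h, Eind1 d μ δ hδm p hp hδlaw i]
  -- put together
  set M : Fin d → ℝ := fun j => ∫ ω, X ω j * X ω i ∂μ with hMdef
  have hterm : ∀ j, ((p j)⁻¹ * βs j * (p i)⁻¹) * (M j * ∏ k ∈ ({j, i} : Finset (Fin d)), p k)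
      = βs j * M j + (if j = i then ((p i)⁻¹ - 1) * (βs i * M i) else 0) := by
    intro j
    by_cases hj : j = i
    · rw [hj, Finset.pair_eq_singleton, Finset.prod_singleton, if_pos rfl]
      field_simp [hpne i]
      ring
    · rw [Finset.prod_pair hj, if_neg hj]
      field_simp [hpne i, hpne j]
      ring
  rw [hsplit]
  simp only [e1, e2, e3]
  rw [hyX]
  simp only [← hMdef]
  rw [Finset.sum_congr rfl fun j _ => hterm j]
  rw [Finset.sum_add_distrib, Finset.sum_ite_eq' Finset.univ i
    (fun _ => ((p i)⁻¹ - 1) * (βs i * M i)), if_pos (Finset.mem_univ i)]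
  have hMi : (∫ ω, X ω i * X ω i ∂μ) = M i := rfl
  rw [hMi]
  field_simp [hpne i]
  ring
end

section
/- Let d ≥ 1, x, β ∈ ℝ^d, y ∈ ℝ be fixed, and let δ be a random vector in {0,1}^d with independent coordinates δ_j ~ Bernoulli(p_j), p_j ∈ (0,1]. Set P = diag(p_1,…,p_d), p_m = min_j p_j, and x̃ = x ⊙ δ. Then E_δ[(x̃ᵀ P⁻¹ β − y)²] = (xᵀβ − y)² + Σ_{j=1}^d (p_j⁻¹ − 1) x_j² β_j², and consequently E_δ[(x̃ᵀ P⁻¹ β − y)²] ≤ (xᵀβ − y)² + ((1 − p_m)/p_m) Σ_{j=1}^d x_j² β_j². -/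
lemma sum_pi_bool {d : ℕ} (g : Fin d → Bool → ℝ) :
    ∑ η : Fin d → Bool, ∏ j, g j (η j) = ∏ j, (g j true + g j false) := by
  classical
  rw [← Fintype.piFinset_univ, ← Finset.prod_univ_sum]
  simp

lemma mask_sum {d : ℕ} (p : Fin d → ℝ) : ∑ η : Fin d → Bool, maskWeight p η = 1 := by
  unfold maskWeight
  rw [sum_pi_bool (fun j b => if b then p j else 1 - p j)]
  simp

lemma mask_first {d : ℕ} (p : Fin d → ℝ) (j : Fin d) :
    ∑ η : Fin d → Bool, maskWeight p η * (if η j then (1:ℝ) else 0) = p j := by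
  classical
  have h : ∀ η : Fin d → Bool, maskWeight p η * (if η j then (1:ℝ) else 0)
      = ∏ k, ((if η k then p k else 1 - p k) * (if k = j then (if η k then (1:ℝ) else 0) else 1)) := by
    intro η
    rw [Finset.prod_mul_distrib]
    unfold maskWeight
    congr 1
    simp [Finset.prod_ite_eq']
  simp_rw [h]
  rw [sum_pi_bool (fun k b => (if b then p k else 1 - p k) * (if k = j then (if b then (1:ℝ) else 0) else 1))]
  have : (∏ k, ((if (true:Bool) then p k else 1 - p k) * (if k = j then (if (true:Bool) then (1:ℝ) else 0) else 1)
      + (if (false:Bool) then p k else 1 - p k) * (if k = j then (if (false:Bool) then (1:ℝ) else 0) else 1)))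
      = ∏ k, if k = j then p k else 1 :=
    Finset.prod_congr rfl (fun k _ => by by_cases hk : k = j <;> simp [hk])
  rw [this]
  simp [Finset.prod_ite_eq']

lemma mask_second {d : ℕ} (p : Fin d → ℝ) (j k : Fin d) :
    ∑ η : Fin d → Bool, maskWeight p η * ((if η j then (1:ℝ) else 0) * (if η k then (1:ℝ) else 0))
      = if j = k then p j else p j * p k := by
  classical
  have h : ∀ η : Fin d → Bool, maskWeight p η * ((if η j then (1:ℝ) else 0) * (if η k then (1:ℝ) else 0))
      = ∏ l, ((if η l then p l else 1 - p l) *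
          ((if l = j then (if η l then (1:ℝ) else 0) else 1) * (if l = k then (if η l then (1:ℝ) else 0) else 1))) := by
    intro η
    rw [Finset.prod_mul_distrib, Finset.prod_mul_distrib]
    unfold maskWeight
    congr 1
    congr 1 <;> simp [Finset.prod_ite_eq']
  simp_rw [h]
  rw [sum_pi_bool (fun l b => (if b then p l else 1 - p l) *
      ((if l = j then (if b then (1:ℝ) else 0) else 1) * (if l = k then (if b then (1:ℝ) else 0) else 1)))]
  have h2 : (∏ l : Fin d,
      ((if (true:Bool) then p l else 1 - p l) *
          ((if l = j then (if (true:Bool) then (1:ℝ) else 0) else 1) * (if l = k then (if (true:Bool) then (1:ℝ) else 0) else 1))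
      + (if (false:Bool) then p l else 1 - p l) *
          ((if l = j then (if (false:Bool) then (1:ℝ) else 0) else 1) * (if l = k then (if (false:Bool) then (1:ℝ) else 0) else 1))))
      = ∏ l, if l ∈ ({j, k} : Finset (Fin d)) then p l else 1 :=
    Finset.prod_congr rfl (fun l _ => by
      by_cases hj : l = j <;> by_cases hk : l = k <;> simp [hj, hk])
  rw [h2, Finset.prod_ite_mem, Finset.univ_inter]
  by_cases hjk : j = k
  · simp [hjk]
  · rw [Finset.prod_pair hjk]; simp [hjk]

/-- With `x̃ = x ⊙ δ`, `δ_j ~ Bernoulli(p_j)` independent, `p_j ∈ (0,1]`,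
`P = diag(p)` and `p_m = min_j p_j`:
`E_δ[(x̃ᵀ P⁻¹ β − y)²] = (xᵀβ − y)² + Σ_j (p_j⁻¹ − 1) x_j² β_j²`, and consequently
`E_δ[(x̃ᵀ P⁻¹ β − y)²] ≤ (xᵀβ − y)² + ((1 − p_m)/p_m) Σ_j x_j² β_j²`. -/
theorem stmt_3 (d : ℕ) (hd : 1 ≤ d) (x β : Fin d → ℝ) (y : ℝ) (p : Fin d → ℝ)
    (hp : ∀ j, 0 < p j ∧ p j ≤ 1)
    (pm : ℝ) (hpm : pm = Finset.univ.inf' ⟨⟨0, hd⟩, Finset.mem_univ _⟩ p) :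
    (∑ η : Fin d → Bool,
        maskWeight p η * ((∑ j, maskedVec x η j * ((p j)⁻¹ * β j)) - y) ^ 2) =
      ((∑ j, x j * β j) - y) ^ 2 + ∑ j, ((p j)⁻¹ - 1) * (x j) ^ 2 * (β j) ^ 2
    ∧
    (∑ η : Fin d → Bool,
        maskWeight p η * ((∑ j, maskedVec x η j * ((p j)⁻¹ * β j)) - y) ^ 2) ≤
      ((∑ j, x j * β j) - y) ^ 2 + ((1 - pm) / pm) * ∑ j, (x j) ^ 2 * (β j) ^ 2 := by
  classical
  have hp0 : ∀ j, p j ≠ 0 := fun j => (hp j).1.ne'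
  set c : Fin d → ℝ := fun j => x j * ((p j)⁻¹ * β j) with hc
  have hEsum : ∀ η : Fin d → Bool,
      (∑ j, maskedVec x η j * ((p j)⁻¹ * β j)) = ∑ j, (if η j then (1:ℝ) else 0) * c j := by
    intro η
    refine Finset.sum_congr rfl fun j _ => ?_
    simp only [maskedVec, hc]
    ring
  have E1 : ∑ η : Fin d → Bool, maskWeight p η * (∑ j, (if η j then (1:ℝ) else 0) * c j)
      = ∑ j, c j * p j := by
    simp_rw [Finset.mul_sum]
    rw [Finset.sum_comm]
    refine Finset.sum_congr rfl fun j _ => ?_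
    have h1 : ∀ η : Fin d → Bool, maskWeight p η * ((if η j then (1:ℝ) else 0) * c j)
        = (maskWeight p η * (if η j then (1:ℝ) else 0)) * c j := fun η => by ring
    simp_rw [h1, ← Finset.sum_mul, mask_first p j]
    ring
  have E2 : ∑ η : Fin d → Bool, maskWeight p η * (∑ j, (if η j then (1:ℝ) else 0) * c j) ^ 2
      = (∑ j, c j * p j) ^ 2 + ∑ j, c j ^ 2 * (p j - p j ^ 2) := by
    have expand : ∀ η : Fin d → Bool,
        maskWeight p η * (∑ j, (if η j then (1:ℝ) else 0) * c j) ^ 2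
        = ∑ j, ∑ k, (maskWeight p η * ((if η j then (1:ℝ) else 0) * (if η k then (1:ℝ) else 0)))
            * (c j * c k) := by
      intro η
      rw [sq, Finset.sum_mul_sum, Finset.mul_sum]
      refine Finset.sum_congr rfl fun j _ => ?_
      rw [Finset.mul_sum]
      refine Finset.sum_congr rfl fun k _ => ?_
      ring
    simp_rw [expand]
    rw [Finset.sum_comm]
    have step : ∀ j : Fin d,
        (∑ η : Fin d → Bool, ∑ k,
          (maskWeight p η * ((if η j then (1:ℝ) else 0) * (if η k then (1:ℝ) else 0))) * (c j * c k))
        = (∑ k, (c j * p j) * (c k * p k)) + c j ^ 2 * (p j - p j ^ 2) := by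
      intro j
      rw [Finset.sum_comm]
      have inner : ∀ k : Fin d,
          (∑ η : Fin d → Bool,
            (maskWeight p η * ((if η j then (1:ℝ) else 0) * (if η k then (1:ℝ) else 0))) * (c j * c k))
          = (if j = k then p j else p j * p k) * (c j * c k) := by
        intro k
        rw [← Finset.sum_mul, mask_second p j k]
      simp_rw [inner]
      have split : ∀ k : Fin d, (if j = k then p j else p j * p k) * (c j * c k)
          = (c j * p j) * (c k * p k) + (if j = k then c j ^ 2 * (p j - p j ^ 2) else 0) := by
        intro k
        by_cases h : j = k
        · subst h; rw [if_pos rfl, if_pos rfl]; ring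
        · simp only [if_neg h, add_zero]; ring
      simp_rw [split]
      rw [Finset.sum_add_distrib, Finset.sum_ite_eq, if_pos (Finset.mem_univ j)]
    simp_rw [step]
    rw [Finset.sum_add_distrib, sq (∑ j, c j * p j), Finset.sum_mul_sum]
  have hcp : ∀ j, c j * p j = x j * β j := by
    intro j; simp only [hc]; field_simp [hp0 j]
  have hvar : ∀ j, c j ^ 2 * (p j - p j ^ 2) = ((p j)⁻¹ - 1) * (x j) ^ 2 * (β j) ^ 2 := by
    intro j; simp only [hc]; field_simp [hp0 j]
  have main : (∑ η : Fin d → Bool,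
        maskWeight p η * ((∑ j, maskedVec x η j * ((p j)⁻¹ * β j)) - y) ^ 2) =
      ((∑ j, x j * β j) - y) ^ 2 + ∑ j, ((p j)⁻¹ - 1) * (x j) ^ 2 * (β j) ^ 2 := by
    calc (∑ η : Fin d → Bool,
            maskWeight p η * ((∑ j, maskedVec x η j * ((p j)⁻¹ * β j)) - y) ^ 2)
        = ∑ η : Fin d → Bool,
            (maskWeight p η * (∑ j, (if η j then (1:ℝ) else 0) * c j) ^ 2
              - (2*y) * (maskWeight p η * (∑ j, (if η j then (1:ℝ) else 0) * c j))
              + y^2 * maskWeight p η) := by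
          refine Finset.sum_congr rfl fun η _ => ?_
          rw [hEsum η]; ring
      _ = (∑ η : Fin d → Bool, maskWeight p η * (∑ j, (if η j then (1:ℝ) else 0) * c j) ^ 2)
            - (2*y) * (∑ η : Fin d → Bool, maskWeight p η * (∑ j, (if η j then (1:ℝ) else 0) * c j))
            + y^2 * (∑ η : Fin d → Bool, maskWeight p η) := by
          rw [Finset.sum_add_distrib, Finset.sum_sub_distrib, ← Finset.mul_sum, ← Finset.mul_sum]
      _ = ((∑ j, c j * p j) ^ 2 + ∑ j, c j ^ 2 * (p j - p j ^ 2))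
            - (2*y) * (∑ j, c j * p j) + y^2 * 1 := by rw [E2, E1, mask_sum]
      _ = ((∑ j, x j * β j) - y) ^ 2 + ∑ j, ((p j)⁻¹ - 1) * (x j) ^ 2 * (β j) ^ 2 := by
          simp_rw [hcp, hvar]; ring
  refine ⟨main, ?_⟩
  rw [main]
  have hpm_pos : 0 < pm := by
    rw [hpm]; apply (Finset.lt_inf'_iff _).2
    exact fun j _ => (hp j).1
  have hpm_le : ∀ j, pm ≤ p j := fun j => hpm ▸ Finset.inf'_le _ (Finset.mem_univ j)
  have hpm1 : pm ≤ 1 := le_trans (hpm_le ⟨0, hd⟩) (hp _).2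
  refine add_le_add_right ?_ _
  rw [Finset.mul_sum]
  refine Finset.sum_le_sum fun j _ => ?_
  have h1 : (p j)⁻¹ - 1 ≤ (1 - pm) / pm := by
    have h2 : (p j)⁻¹ - 1 = (1 - p j) / p j := by
      rw [eq_div_iff (hp0 j), sub_mul, inv_mul_cancel₀ (hp0 j)]; ring
    rw [h2]
    exact div_le_div₀ (by linarith) (by linarith [hpm_le j]) hpm_pos (hpm_le j)
  calc ((p j)⁻¹ - 1) * (x j) ^ 2 * (β j) ^ 2 = ((p j)⁻¹ - 1) * ((x j) ^ 2 * (β j) ^ 2) := by ring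
    _ ≤ (1 - pm) / pm * ((x j) ^ 2 * (β j) ^ 2) :=
        mul_le_mul_of_nonneg_right h1 (by positivity)
end

section
/- Let (X, ε, δ) be random with values in ℝ^d × ℝ × {0,1}^d such that: ε is independent of X with E[ε] = 0 and E[ε²] < ∞; δ has independent coordinates δ_j ~ Bernoulli(p_j) with p_j ∈ (0,1] and is independent of (X, ε); and E[‖X‖⁴] < ∞. Let y = Xᵀβ* + ε for a fixed β* ∈ ℝ^d, P = diag(p_1,…,p_d), p_m = min_j p_j, X̃ = X ⊙ δ, and g̃(β*) = P⁻¹ X̃ (X̃ᵀ P⁻¹ β* − y) − (I − P) P⁻² diag(X̃ X̃ᵀ) β*. Then E[‖g̃(β*)‖²] ≤ (1/p_m²) E[ε² ‖X‖²] + (((1 − p_m) + (1 − p_m)²)/p_m³) E[‖X‖² · Σ_{j=1}^d X_j² (β*_j)²]. -/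
open MeasureTheory ProbabilityTheory Finset

/-- Factorization of expectations over a Bernoulli product mask. -/
lemma bern_mom {d : ℕ} (p : Fin d → ℝ) (s : Finset (Fin d)) (φ : Fin d → Bool → ℝ) :
    ∑ η : Fin d → Bool, (∏ j, if η j then p j else 1 - p j) * ∏ l ∈ s, φ l (η l)
      = ∏ l ∈ s, (p l * φ l true + (1 - p l) * φ l false) := by
  classical
  set Φ : Fin d → Bool → ℝ := fun l b => (if η : l ∈ s then φ l b else 1) with hΦ
  have h1 : ∀ η : Fin d → Bool, ∏ l ∈ s, φ l (η l) = ∏ l, Φ l (η l) := by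
    intro η
    rw [← Finset.prod_subset (Finset.subset_univ s) (fun x _ hx => by simp [hΦ, hx])]
    exact Finset.prod_congr rfl fun x hx => by simp [hΦ, hx]
  have h2 : ∀ η : Fin d → Bool,
      (∏ j, if η j then p j else 1 - p j) * ∏ l, Φ l (η l)
        = ∏ l, ((if η l then p l else 1 - p l) * Φ l (η l)) := fun η =>
    (Finset.prod_mul_distrib).symm
  simp_rw [h1, h2]
  rw [← Fintype.prod_sum (fun l (b : Bool) => (if b then p l else 1 - p l) * Φ l b)]
  have h3 : ∀ l : Fin d, (∑ b : Bool, (if b then p l else 1 - p l) * Φ l b)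
      = (if l ∈ s then (p l * φ l true + (1 - p l) * φ l false) else 1) := by
    intro l
    by_cases hl : l ∈ s <;> simp [Fintype.sum_bool, hΦ, hl] <;> ring
  rw [Finset.prod_congr rfl fun l _ => h3 l]
  rw [Finset.prod_ite_mem, Finset.univ_inter]

lemma bern_secmom {d : ℕ} (p : Fin d → ℝ) (hp : ∀ j, 0 < p j ∧ p j ≤ 1) (u : Fin d → ℝ)
    (i : Fin d) :
    ∑ η : Fin d → Bool, (∏ j, if η j then p j else 1 - p j) *
        (∑ j ∈ univ.erase i, ((if η j then (p j)⁻¹ else 0) - 1) * u j) ^ 2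
      = ∑ j ∈ univ.erase i, ((1 - p j) / p j) * (u j) ^ 2 := by
  classical
  set ψ : Fin d → Bool → ℝ := fun j b => ((if b then (p j)⁻¹ else 0) - 1) * u j with hψ
  have key : ∀ j, ∀ k,
      ∑ η : Fin d → Bool, (∏ l, if η l then p l else 1 - p l) * (ψ j (η j) * ψ k (η k))
        = if j = k then (1 - p j) / p j * u j ^ 2 else 0 := by
    intro j k
    by_cases hjk : j = k
    · subst hjk
      have h := bern_mom p {j} (fun l b => ψ l b ^ 2)
      simp only [Finset.prod_singleton] at h
      simp only [if_pos rfl, ← sq]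
      rw [h, hψ]
      have hpj := (hp j).1.ne'
      simp only [if_pos rfl, if_neg (by simp : ¬(false = true)), ↓reduceIte]
      field_simp
      ring
    · have h := bern_mom p {j, k} ψ
      rw [if_neg hjk]
      have hpair : ∀ f : Fin d → ℝ, ∏ l ∈ ({j, k} : Finset (Fin d)), f l = f j * f k :=
        fun f => Finset.prod_pair hjk
      simp only [hpair] at h
      have hpj := (hp j).1
      have h1 : p j * ψ j true + (1 - p j) * ψ j false = 0 := by
        simp only [hψ, if_pos rfl, if_neg (by simp : ¬(false = true)), ↓reduceIte]
        field_simp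
        ring
      rw [h, h1, zero_mul]
  have expand : ∀ η : Fin d → Bool,
      (∏ l, if η l then p l else 1 - p l) * (∑ j ∈ univ.erase i, ψ j (η j)) ^ 2
        = ∑ j ∈ univ.erase i, ∑ k ∈ univ.erase i,
            (∏ l, if η l then p l else 1 - p l) * (ψ j (η j) * ψ k (η k)) := by
    intro η
    rw [sq, Finset.sum_mul_sum]
    simp_rw [Finset.mul_sum]
  calc ∑ η : Fin d → Bool, (∏ l, if η l then p l else 1 - p l) *
        (∑ j ∈ univ.erase i, ψ j (η j)) ^ 2
      = ∑ η : Fin d → Bool, ∑ j ∈ univ.erase i, ∑ k ∈ univ.erase i,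
          (∏ l, if η l then p l else 1 - p l) * (ψ j (η j) * ψ k (η k)) := by
        exact Finset.sum_congr rfl fun η _ => expand η
    _ = ∑ j ∈ univ.erase i, ∑ η : Fin d → Bool, ∑ k ∈ univ.erase i,
          (∏ l, if η l then p l else 1 - p l) * (ψ j (η j) * ψ k (η k)) := Finset.sum_comm
    _ = ∑ j ∈ univ.erase i, ((1 - p j) / p j) * (u j) ^ 2 := by
        refine Finset.sum_congr rfl fun j hj => ?_
        rw [Finset.sum_comm]
        rw [Finset.sum_congr rfl fun k (hk : k ∈ univ.erase i) => key j k]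
        rw [Finset.sum_ite_eq (univ.erase i) j (fun k => (1 - p j) / p j * u j ^ 2)]
        simp [hj]

set_option maxHeartbeats 2000000 in
/-- Let `(X, ε, δ)` be random with `ε ⟂ X`, `E[ε] = 0`, `E[ε²] < ∞`,
`δ` an independent-coordinates Bernoulli mask (parameters `p_j ∈ (0,1]`) independent of
`(X, ε)`, and `E[‖X‖⁴] < ∞`.  With `y = Xᵀβ* + ε`, `P = diag(p)`, `p_m = min_j p_j`,
`X̃ = X ⊙ δ` and `g̃(β*) = P⁻¹ X̃ (X̃ᵀ P⁻¹ β* − y) − (I − P) P⁻² diag(X̃ X̃ᵀ) β*`: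
`E[‖g̃(β*)‖²] ≤ (1/p_m²) E[ε² ‖X‖²]
  + (((1 − p_m) + (1 − p_m)²)/p_m³) E[‖X‖² Σ_j X_j² β*_j²]`. -/
theorem stmt_5 (d : ℕ) (hd : 1 ≤ d)
    {Ω : Type*} [MeasurableSpace Ω] (μ : Measure Ω) [IsProbabilityMeasure μ]
    (X : Ω → EuclideanSpace ℝ (Fin d)) (ε : Ω → ℝ) (δ : Ω → Fin d → Bool)
    (hXm : ∀ j, Measurable fun ω => X ω j) (hεm : Measurable ε) (hδm : Measurable δ)
    (hεX : IndepFun X ε μ)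
    (hε0 : ∫ ω, ε ω ∂μ = 0)
    (hε2 : Integrable (fun ω => (ε ω) ^ 2) μ)
    (p : Fin d → ℝ) (hp : ∀ j, 0 < p j ∧ p j ≤ 1)
    (hδlaw : ∀ η : Fin d → Bool,
      μ {ω | δ ω = η} = ENNReal.ofReal (∏ j, if η j then p j else 1 - p j))
    (hδindep : IndepFun (fun ω => (X ω, ε ω)) δ μ)
    (hX4 : Integrable (fun ω => ‖X ω‖ ^ 4) μ)
    (βs : EuclideanSpace ℝ (Fin d))
    (y : Ω → ℝ) (hy : ∀ ω, y ω = (∑ j, X ω j * βs j) + ε ω)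
    (pm : ℝ) (hpm : pm = Finset.univ.inf' ⟨⟨0, hd⟩, Finset.mem_univ _⟩ p)
    (g : Ω → Fin d → ℝ)
    (hg : ∀ ω, g ω =
      ((∑ j, (X ω j * (if δ ω j then 1 else 0)) * ((p j)⁻¹ * βs j)) - y ω) •
          (Matrix.diagonal fun j => (p j)⁻¹).mulVec (fun j => X ω j * (if δ ω j then 1 else 0)) -
        ((1 - Matrix.diagonal p) * (Matrix.diagonal fun j => (p j)⁻¹) *
            (Matrix.diagonal fun j => (p j)⁻¹) *
            (Matrix.diagonal fun j => (X ω j * (if δ ω j then 1 else 0)) ^ 2)).mulVec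
          (fun j => βs j)) :
    ∫ ω, ∑ i, (g ω i) ^ 2 ∂μ ≤
      (1 / pm ^ 2) * ∫ ω, (ε ω) ^ 2 * ‖X ω‖ ^ 2 ∂μ +
        (((1 - pm) + (1 - pm) ^ 2) / pm ^ 3) *
          ∫ ω, ‖X ω‖ ^ 2 * ∑ j, (X ω j) ^ 2 * (βs j) ^ 2 ∂μ := by
  classical
  -- basic facts about pm
  have hpm_le : ∀ j, pm ≤ p j := fun j => hpm ▸ Finset.inf'_le _ (Finset.mem_univ j)
  have hpm_pos : 0 < pm := by
    obtain ⟨j, _, hj⟩ := Finset.exists_mem_eq_inf' (s := Finset.univ) ⟨⟨0, hd⟩, Finset.mem_univ _⟩ p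
    rw [hpm.trans hj]
    exact (hp j).1
  have hpm1 : pm ≤ 1 := le_trans (hpm_le ⟨0, hd⟩) (hp _).2
  -- the weight
  set w : (Fin d → Bool) → ℝ := fun η => ∏ j, if η j then p j else 1 - p j with hwdef
  have hw0 : ∀ η, 0 ≤ w η := by
    intro η
    refine Finset.prod_nonneg fun j _ => ?_
    by_cases h : η j <;> simp [h]
    · exact (hp j).1.le
    · linarith [(hp j).2]
  have hw1 : ∑ η : Fin d → Bool, w η = 1 := by
    have h := bern_mom p ∅ (fun _ _ => (1:ℝ))
    simpa using h
  -- norm squared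
  have hnorm : ∀ x : EuclideanSpace ℝ (Fin d), ‖x‖ ^ 2 = ∑ i, (x i) ^ 2 := by
    intro x
    rw [EuclideanSpace.norm_eq, Real.sq_sqrt (by positivity)]
    simp [sq_abs]
  have hcoord : ∀ (x : EuclideanSpace ℝ (Fin d)) (i : Fin d), (x i) ^ 2 ≤ ‖x‖ ^ 2 := by
    intro x i
    rw [hnorm]
    exact Finset.single_le_sum (fun j _ => sq_nonneg (x j)) (Finset.mem_univ i)
  have hcoordabs : ∀ (x : EuclideanSpace ℝ (Fin d)) (i : Fin d), |x i| ≤ ‖x‖ := by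
    intro x i
    calc |x i| = Real.sqrt ((x i) ^ 2) := (Real.sqrt_sq_eq_abs _).symm
    _ ≤ Real.sqrt (‖x‖ ^ 2) := Real.sqrt_le_sqrt (hcoord x i)
    _ = ‖x‖ := Real.sqrt_sq (norm_nonneg x)
  -- deterministic-mask component functions
  set Cf : Fin d → (Fin d → Bool) → EuclideanSpace ℝ (Fin d) → ℝ :=
    fun i η x => (if η i then (p i)⁻¹ else 0) * x i with hCf
  set Tf : Fin d → (Fin d → Bool) → EuclideanSpace ℝ (Fin d) → ℝ :=
    fun i η x => ∑ j ∈ Finset.univ.erase i, ((if η j then (p j)⁻¹ else 0) - 1) * (x j * βs j)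
    with hTf
  set Qf : (Fin d → Bool) → EuclideanSpace ℝ (Fin d) → ℝ :=
    fun η x => ∑ i, (Cf i η x) ^ 2 * (Tf i η x) ^ 2 with hQf
  set Lf : (Fin d → Bool) → EuclideanSpace ℝ (Fin d) → ℝ :=
    fun η x => ∑ i, (-2) * ((Cf i η x) ^ 2 * Tf i η x) with hLf
  set Mf : (Fin d → Bool) → EuclideanSpace ℝ (Fin d) → ℝ :=
    fun η x => ∑ i, (Cf i η x) ^ 2 with hMf
  -- STEP A : pointwise identification of g
  have stepA : ∀ ω i, g ω i = Cf i (δ ω) (X ω) * (Tf i (δ ω) (X ω) - ε ω) := by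
    intro ω i
    have hgi : g ω i =
        ((∑ j, (X ω j * (if δ ω j then 1 else 0)) * ((p j)⁻¹ * βs j)) - y ω) *
            ((p i)⁻¹ * (X ω i * (if δ ω i then 1 else 0))) -
          (1 - p i) * (p i)⁻¹ * (p i)⁻¹ * (X ω i * (if δ ω i then 1 else 0)) ^ 2 * βs i := by
      rw [hg ω]
      simp only [Pi.sub_apply, Pi.smul_apply, smul_eq_mul]
      rw [Matrix.mulVec_diagonal, ← Matrix.diagonal_one, Matrix.diagonal_sub,
        Matrix.diagonal_mul_diagonal, Matrix.diagonal_mul_diagonal,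
        Matrix.diagonal_mul_diagonal, Matrix.mulVec_diagonal]
    by_cases hδi : δ ω i
    · have hsum' : (∑ j, (X ω j * (if δ ω j then 1 else 0)) * ((p j)⁻¹ * βs j)) -
          (∑ j, X ω j * βs j)
          = Tf i (δ ω) (X ω) + ((p i)⁻¹ - 1) * (X ω i * βs i) := by
        rw [← Finset.sum_sub_distrib]
        have hterm : ∀ j, (X ω j * (if δ ω j then 1 else 0)) * ((p j)⁻¹ * βs j) -
            X ω j * βs j = ((if δ ω j then (p j)⁻¹ else 0) - 1) * (X ω j * βs j) := by
          intro j
          by_cases hj : δ ω j <;> simp [hj] <;> ring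
        rw [Finset.sum_congr rfl fun j _ => hterm j]
        rw [← Finset.add_sum_erase _ _ (Finset.mem_univ i), hTf]
        simp only [if_pos hδi]
        ring
      rw [hgi, hy ω]
      have hp_i := (hp i).1.ne'
      have hrw : (∑ j, (X ω j * (if δ ω j then 1 else 0)) * ((p j)⁻¹ * βs j)) -
          ((∑ j, X ω j * βs j) + ε ω)
          = (Tf i (δ ω) (X ω) + ((p i)⁻¹ - 1) * (X ω i * βs i)) - ε ω := by
        rw [← hsum']; ring
      rw [hrw]
      simp only [hCf, if_pos hδi, if_pos hδi, mul_one]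
      field_simp
      ring
    · rw [hgi]
      simp [hCf, hδi]
  -- measurability
  have hXmeas : Measurable X := (WithLp.measurable_toLp 2 (Fin d → ℝ)).comp (measurable_pi_iff.mpr hXm)
  have mCf : ∀ i η, Measurable (Cf i η) := fun i η =>
    ((measurable_pi_apply i).comp (WithLp.measurable_ofLp 2 (Fin d → ℝ))).const_mul _
  have mTf : ∀ i η, Measurable (Tf i η) := fun i η =>
    Finset.measurable_sum _ (fun j _ => (((measurable_pi_apply j).comp (WithLp.measurable_ofLp 2 (Fin d → ℝ))).mul_const _).const_mul _)
  have mQf : ∀ η, Measurable (Qf η) := fun η =>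
    Finset.measurable_sum _ fun i _ => ((mCf i η).pow_const 2).mul ((mTf i η).pow_const 2)
  have mLf : ∀ η, Measurable (Lf η) := fun η =>
    Finset.measurable_sum _ fun i _ => (((mCf i η).pow_const 2).mul (mTf i η)).const_mul _
  have mMf : ∀ η, Measurable (Mf η) := fun η =>
    Finset.measurable_sum _ fun i _ => (mCf i η).pow_const 2
  -- the indicator of the event δ = η
  set I : (Fin d → Bool) → Ω → ℝ := fun η ω => if δ ω = η then 1 else 0 with hIdef
  have mI : ∀ η, Measurable (I η) := fun η =>
    (measurable_of_countable (fun b : Fin d → Bool => if b = η then (1:ℝ) else 0)).comp hδm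
  have hIbd : ∀ η ω, ‖I η ω‖ ≤ 1 := by
    intro η ω
    by_cases h : δ ω = η <;> simp [hIdef, h]
  have hIint : ∀ η, ∫ ω, I η ω ∂μ = w η := by
    intro η
    have hind : I η = Set.indicator {ω | δ ω = η} (1 : Ω → ℝ) := by
      funext ω
      by_cases h : δ ω = η <;> simp [hIdef, h, Set.indicator_apply]
    have hms : MeasurableSet {ω | δ ω = η} := hδm (measurableSet_singleton η)
    rw [hind, integral_indicator_one hms, measureReal_def, hδlaw η, ENNReal.toReal_ofReal (hw0 η)]
  -- pointwise decomposition of the integrand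
  have hsum : ∀ ω, ∑ i, (g ω i) ^ 2 =
      ∑ η : Fin d → Bool,
        (Qf η (X ω) + Lf η (X ω) * ε ω + Mf η (X ω) * ε ω ^ 2) * I η ω := by
    intro ω
    have h1 : ∑ i, (g ω i) ^ 2
        = Qf (δ ω) (X ω) + Lf (δ ω) (X ω) * ε ω + Mf (δ ω) (X ω) * ε ω ^ 2 := by
      simp only [hQf, hLf, hMf]
      rw [Finset.sum_mul, Finset.sum_mul, ← Finset.sum_add_distrib, ← Finset.sum_add_distrib]
      refine Finset.sum_congr rfl fun i _ => ?_
      rw [stepA ω i]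
      ring
    rw [h1]
    have h2 : ∀ η : Fin d → Bool,
        (Qf η (X ω) + Lf η (X ω) * ε ω + Mf η (X ω) * ε ω ^ 2) * I η ω
          = if δ ω = η then Qf η (X ω) + Lf η (X ω) * ε ω + Mf η (X ω) * ε ω ^ 2 else 0 := by
      intro η
      simp only [hIdef, mul_ite, mul_one, mul_zero]
    rw [Finset.sum_congr rfl fun η _ => h2 η,
      Finset.sum_ite_eq Finset.univ (δ ω)
        (fun η => Qf η (X ω) + Lf η (X ω) * ε ω + Mf η (X ω) * ε ω ^ 2)]
    simp
  -- bounds on the component functions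
  set B : ℝ := ∑ j, |βs j| with hBdef
  have hB0 : 0 ≤ B := Finset.sum_nonneg fun j _ => abs_nonneg _
  have hCb : ∀ i η (x : EuclideanSpace ℝ (Fin d)), (Cf i η x) ^ 2 ≤ pm⁻¹ ^ 2 * (x i) ^ 2 := by
    intro i η x
    have h1 : (0:ℝ) ≤ (if η i then (p i)⁻¹ else 0) := by
      by_cases h : η i <;> simp [h, (hp i).1.le, inv_nonneg]
    have h2 : (if η i then (p i)⁻¹ else 0) ≤ pm⁻¹ := by
      have : (p i)⁻¹ ≤ pm⁻¹ := one_div pm ▸ inv_anti₀ hpm_pos (hpm_le i)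
      by_cases h : η i <;> simp [h, this, inv_nonneg, hpm_pos.le]
    have h3 : (if η i then (p i)⁻¹ else 0) ^ 2 ≤ pm⁻¹ ^ 2 :=
      pow_le_pow_left₀ h1 h2 2
    calc (Cf i η x) ^ 2 = (if η i then (p i)⁻¹ else 0) ^ 2 * (x i) ^ 2 := by
          rw [hCf]; ring
      _ ≤ pm⁻¹ ^ 2 * (x i) ^ 2 := by
          exact mul_le_mul_of_nonneg_right h3 (sq_nonneg _)
  have hTb : ∀ i η (x : EuclideanSpace ℝ (Fin d)), |Tf i η x| ≤ (pm⁻¹ + 1) * B * ‖x‖ := by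
    intro i η x
    have h1 : |Tf i η x| ≤ ∑ j ∈ Finset.univ.erase i,
        |((if η j then (p j)⁻¹ else 0) - 1) * (x j * βs j)| := by
      rw [hTf]; exact Finset.abs_sum_le_sum_abs _ _
    have h2 : ∀ j, |((if η j then (p j)⁻¹ else 0) - 1) * (x j * βs j)|
        ≤ (pm⁻¹ + 1) * (‖x‖ * |βs j|) := by
      intro j
      rw [abs_mul, abs_mul]
      have ha : |(if η j then (p j)⁻¹ else 0) - 1| ≤ pm⁻¹ + 1 := by
        have hpj : 0 ≤ (p j)⁻¹ := inv_nonneg.mpr (hp j).1.le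
        have hpj2 : (p j)⁻¹ ≤ pm⁻¹ := inv_anti₀ hpm_pos (hpm_le j)
        rw [abs_sub_le_iff]
        constructor <;> by_cases h : η j <;> simp [h] <;> linarith [inv_nonneg.mpr hpm_pos.le]
      have hb : |x j| * |βs j| ≤ ‖x‖ * |βs j| :=
        mul_le_mul_of_nonneg_right (hcoordabs x j) (abs_nonneg _)
      exact mul_le_mul ha hb (by positivity) (by positivity)
    calc |Tf i η x| ≤ ∑ j ∈ Finset.univ.erase i,
          |((if η j then (p j)⁻¹ else 0) - 1) * (x j * βs j)| := h1
      _ ≤ ∑ j ∈ Finset.univ.erase i, (pm⁻¹ + 1) * (‖x‖ * |βs j|) :=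
          Finset.sum_le_sum fun j _ => h2 j
      _ ≤ ∑ j, (pm⁻¹ + 1) * (‖x‖ * |βs j|) :=
          Finset.sum_le_sum_of_subset_of_nonneg (Finset.erase_subset i Finset.univ)
            (fun j _ _ => by positivity)
      _ = (pm⁻¹ + 1) * B * ‖x‖ := by
          rw [← Finset.mul_sum, hBdef, ← Finset.mul_sum]
          ring
  have hQ0 : ∀ η x, 0 ≤ Qf η x := fun η x =>
    Finset.sum_nonneg fun i _ => mul_nonneg (sq_nonneg _) (sq_nonneg _)
  have hM0 : ∀ η x, 0 ≤ Mf η x := fun η x => Finset.sum_nonneg fun i _ => sq_nonneg _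
  have hMb : ∀ η (x : EuclideanSpace ℝ (Fin d)), Mf η x ≤ pm⁻¹ ^ 2 * ‖x‖ ^ 2 := by
    intro η x
    calc Mf η x ≤ ∑ i, pm⁻¹ ^ 2 * (x i) ^ 2 := Finset.sum_le_sum fun i _ => hCb i η x
      _ = pm⁻¹ ^ 2 * ‖x‖ ^ 2 := by rw [← Finset.mul_sum, hnorm]
  have hQb : ∀ η (x : EuclideanSpace ℝ (Fin d)),
      Qf η x ≤ pm⁻¹ ^ 2 * ((pm⁻¹ + 1) * B) ^ 2 * ‖x‖ ^ 4 := by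
    intro η x
    have h1 : ∀ i, (Cf i η x) ^ 2 * (Tf i η x) ^ 2
        ≤ (pm⁻¹ ^ 2 * (x i) ^ 2) * (((pm⁻¹ + 1) * B * ‖x‖) ^ 2) := by
      intro i
      have hT2 : (Tf i η x) ^ 2 ≤ ((pm⁻¹ + 1) * B * ‖x‖) ^ 2 := by
        rw [← sq_abs (Tf i η x)]
        exact pow_le_pow_left₀ (abs_nonneg _) (hTb i η x) 2
      exact mul_le_mul (hCb i η x) hT2 (sq_nonneg _) (by positivity)
    calc Qf η x ≤ ∑ i, (pm⁻¹ ^ 2 * (x i) ^ 2) * (((pm⁻¹ + 1) * B * ‖x‖) ^ 2) :=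
        Finset.sum_le_sum fun i _ => h1 i
      _ = (pm⁻¹ ^ 2 * (((pm⁻¹ + 1) * B * ‖x‖) ^ 2)) * ∑ i, (x i) ^ 2 := by
          rw [← Finset.sum_mul, ← Finset.mul_sum]; ring
      _ = pm⁻¹ ^ 2 * ((pm⁻¹ + 1) * B) ^ 2 * ‖x‖ ^ 4 := by
          rw [← hnorm]; ring
  -- generic integrability
  have hpow : ∀ t : ℝ, 0 ≤ t → ∀ k : ℕ, k ≤ 4 → t ^ k ≤ 1 + t ^ 4 := by
    intro t ht k hk
    rcases le_total t 1 with h | h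
    · have h1 : t ^ k ≤ 1 := pow_le_one₀ ht h
      have h2 : (0:ℝ) ≤ t ^ 4 := by positivity
      linarith
    · have h1 : t ^ k ≤ t ^ 4 := pow_le_pow_right₀ h hk
      linarith
  have hmaster : ∀ (F : EuclideanSpace ℝ (Fin d) → ℝ) (K : ℝ), Measurable F →
      (∀ x, |F x| ≤ K * (1 + ‖x‖ ^ 4)) → Integrable (fun ω => F (X ω)) μ := by
    intro F K hF hbd
    refine Integrable.mono' (((integrable_const (1:ℝ)).add hX4).const_mul K)
      ((hF.comp hXmeas).aestronglyMeasurable) (ae_of_all _ fun ω => ?_)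
    simpa [Real.norm_eq_abs] using hbd (X ω)
  have hQint : ∀ η, Integrable (fun ω => Qf η (X ω)) μ := by
    intro η
    refine hmaster (Qf η) (pm⁻¹ ^ 2 * ((pm⁻¹ + 1) * B) ^ 2) (mQf η) fun x => ?_
    rw [abs_of_nonneg (hQ0 η x)]
    calc Qf η x ≤ pm⁻¹ ^ 2 * ((pm⁻¹ + 1) * B) ^ 2 * ‖x‖ ^ 4 := hQb η x
      _ ≤ pm⁻¹ ^ 2 * ((pm⁻¹ + 1) * B) ^ 2 * (1 + ‖x‖ ^ 4) := by
          have := hpow ‖x‖ (norm_nonneg x) 4 le_rfl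
          have h0 : (0:ℝ) ≤ pm⁻¹ ^ 2 * ((pm⁻¹ + 1) * B) ^ 2 := by positivity
          exact mul_le_mul_of_nonneg_left this h0
  have hLint : ∀ η, Integrable (fun ω => Lf η (X ω)) μ := by
    intro η
    have hK0 : (0:ℝ) ≤ 2 * (pm⁻¹ ^ 2 * ((pm⁻¹ + 1) * B)) :=
      mul_nonneg (by norm_num)
        (mul_nonneg (sq_nonneg _) (mul_nonneg (by positivity) hB0))
    refine hmaster (Lf η) (2 * (pm⁻¹ ^ 2 * ((pm⁻¹ + 1) * B))) (mLf η) fun x => ?_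
    have h1 : |Lf η x| ≤ ∑ i, 2 * ((pm⁻¹ ^ 2 * (x i) ^ 2) * ((pm⁻¹ + 1) * B * ‖x‖)) := by
      refine le_trans (by rw [hLf]; exact Finset.abs_sum_le_sum_abs _ _)
        (Finset.sum_le_sum fun i _ => ?_)
      rw [abs_mul, abs_mul]
      have hc : |(Cf i η x) ^ 2| ≤ pm⁻¹ ^ 2 * (x i) ^ 2 := by
        rw [abs_of_nonneg (sq_nonneg _)]; exact hCb i η x
      have h2 : |(-2 : ℝ)| = 2 := by norm_num
      rw [h2]
      have h3 := mul_le_mul hc (hTb i η x) (abs_nonneg _) (by positivity)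
      nlinarith [h3]
    have h2 : ∑ i, 2 * ((pm⁻¹ ^ 2 * (x i) ^ 2) * ((pm⁻¹ + 1) * B * ‖x‖))
        = 2 * (pm⁻¹ ^ 2 * ((pm⁻¹ + 1) * B)) * (‖x‖ ^ 2 * ‖x‖) := by
      calc ∑ i, 2 * ((pm⁻¹ ^ 2 * (x i) ^ 2) * ((pm⁻¹ + 1) * B * ‖x‖))
          = ∑ i, (2 * (pm⁻¹ ^ 2 * ((pm⁻¹ + 1) * B)) * ‖x‖) * (x i) ^ 2 :=
            Finset.sum_congr rfl fun i _ => by ring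
        _ = (2 * (pm⁻¹ ^ 2 * ((pm⁻¹ + 1) * B)) * ‖x‖) * ∑ i, (x i) ^ 2 :=
            (Finset.mul_sum _ _ _).symm
        _ = 2 * (pm⁻¹ ^ 2 * ((pm⁻¹ + 1) * B)) * (‖x‖ ^ 2 * ‖x‖) := by
            rw [← hnorm]; ring
    calc |Lf η x| ≤ 2 * (pm⁻¹ ^ 2 * ((pm⁻¹ + 1) * B)) * (‖x‖ ^ 2 * ‖x‖) := h1.trans h2.le
      _ = 2 * (pm⁻¹ ^ 2 * ((pm⁻¹ + 1) * B)) * ‖x‖ ^ 3 := by ring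
      _ ≤ 2 * (pm⁻¹ ^ 2 * ((pm⁻¹ + 1) * B)) * (1 + ‖x‖ ^ 4) :=
          mul_le_mul_of_nonneg_left (hpow ‖x‖ (norm_nonneg x) 3 (by norm_num)) hK0
  have hMint : ∀ η, Integrable (fun ω => Mf η (X ω)) μ := by
    intro η
    refine hmaster (Mf η) (pm⁻¹ ^ 2) (mMf η) fun x => ?_
    rw [abs_of_nonneg (hM0 η x)]
    calc Mf η x ≤ pm⁻¹ ^ 2 * ‖x‖ ^ 2 := hMb η x
      _ ≤ pm⁻¹ ^ 2 * (1 + ‖x‖ ^ 4) :=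
          mul_le_mul_of_nonneg_left (hpow ‖x‖ (norm_nonneg x) 2 (by norm_num)) (sq_nonneg _)
  have hnormsqint : Integrable (fun ω => ‖X ω‖ ^ 2) μ := by
    refine hmaster (fun x => ‖x‖ ^ 2) 1 (measurable_norm.pow_const 2) fun x => ?_
    rw [abs_of_nonneg (sq_nonneg _), one_mul]
    exact hpow ‖x‖ (norm_nonneg x) 2 (by norm_num)
  have hεint : Integrable ε μ := by
    refine Integrable.mono' ((integrable_const (1:ℝ)).add hε2)
      hεm.aestronglyMeasurable (ae_of_all _ fun ω => ?_)
    rw [Real.norm_eq_abs]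
    simp only [Pi.add_apply]
    nlinarith [sq_nonneg (|ε ω| - 1), sq_abs (ε ω), abs_nonneg (ε ω)]
  have hε2m : Measurable (fun ω => ε ω ^ 2) := hεm.pow_const 2
  -- independent products
  have hLεint : ∀ η, Integrable (fun ω => Lf η (X ω) * ε ω) μ := fun η =>
    IndepFun.integrable_mul (hεX.comp (mLf η) measurable_id) (hLint η) hεint
  have hMε2int : ∀ η, Integrable (fun ω => Mf η (X ω) * ε ω ^ 2) μ := fun η =>
    IndepFun.integrable_mul (hεX.comp (mMf η) (measurable_id.pow_const 2)) (hMint η) hε2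
  have hnormε2int : Integrable (fun ω => ‖X ω‖ ^ 2 * ε ω ^ 2) μ :=
    IndepFun.integrable_mul
      (hεX.comp (measurable_norm.pow_const 2) (measurable_id.pow_const 2)) hnormsqint hε2
  have hfinal2int : Integrable (fun ω => ε ω ^ 2 * ‖X ω‖ ^ 2) μ :=
    hnormε2int.congr (ae_of_all _ fun ω => mul_comm _ _)
  have hB2 : Integrable (fun ω => ‖X ω‖ ^ 2 * ∑ j, (X ω j) ^ 2 * (βs j) ^ 2) μ := by
    refine hmaster (fun x => ‖x‖ ^ 2 * ∑ j, (x j) ^ 2 * (βs j) ^ 2) (∑ j, (βs j) ^ 2)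
      ((measurable_norm.pow_const 2).mul
        (Finset.measurable_sum _ fun j _ => (((measurable_pi_apply j).comp (WithLp.measurable_ofLp 2 (Fin d → ℝ))).pow_const 2).mul_const _))
      fun x => ?_
    have hs0 : (0:ℝ) ≤ ∑ j, (x j) ^ 2 * (βs j) ^ 2 :=
      Finset.sum_nonneg fun j _ => mul_nonneg (sq_nonneg _) (sq_nonneg _)
    rw [abs_of_nonneg (mul_nonneg (sq_nonneg _) hs0)]
    have h1 : ∑ j, (x j) ^ 2 * (βs j) ^ 2 ≤ ∑ j, ‖x‖ ^ 2 * (βs j) ^ 2 :=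
      Finset.sum_le_sum fun j _ => mul_le_mul_of_nonneg_right (hcoord x j) (sq_nonneg _)
    have h2 : ∑ j, ‖x‖ ^ 2 * (βs j) ^ 2 = ‖x‖ ^ 2 * ∑ j, (βs j) ^ 2 :=
      (Finset.mul_sum _ _ _).symm
    have hb2 : (0:ℝ) ≤ ∑ j, (βs j) ^ 2 := Finset.sum_nonneg fun j _ => sq_nonneg _
    calc ‖x‖ ^ 2 * ∑ j, (x j) ^ 2 * (βs j) ^ 2
        ≤ ‖x‖ ^ 2 * (‖x‖ ^ 2 * ∑ j, (βs j) ^ 2) := by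
          exact mul_le_mul_of_nonneg_left (h1.trans h2.le) (sq_nonneg _)
      _ = (∑ j, (βs j) ^ 2) * ‖x‖ ^ 4 := by ring
      _ ≤ (∑ j, (βs j) ^ 2) * (1 + ‖x‖ ^ 4) :=
          mul_le_mul_of_nonneg_left (hpow ‖x‖ (norm_nonneg x) 4 le_rfl) hb2
  -- products with indicators
  have hImul : ∀ (η : Fin d → Bool) (A : Ω → ℝ), Integrable A μ →
      Integrable (fun ω => A ω * I η ω) μ := by
    intro η A hA
    have h := hA.bdd_mul (c := 1) (mI η).aestronglyMeasurable (ae_of_all _ (hIbd η))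
    exact h.congr (ae_of_all _ fun ω => mul_comm _ _)
  -- splitting integrals against the indicator using independence
  have hsplit : ∀ (η : Fin d → Bool) (F : EuclideanSpace ℝ (Fin d) × ℝ → ℝ), Measurable F →
      ∫ ω, F (X ω, ε ω) * I η ω ∂μ = (∫ ω, F (X ω, ε ω) ∂μ) * w η := by
    intro η F hF
    have h1 : IndepFun (fun ω => F (X ω, ε ω)) (I η) μ :=
      hδindep.comp hF
        (measurable_of_countable (fun b : Fin d → Bool => if b = η then (1:ℝ) else 0))
    have h2 := h1.integral_fun_mul_eq_mul_integral ((hF.comp (hXmeas.prodMk hεm)).aestronglyMeasurable)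
      (mI η).aestronglyMeasurable
    rw [h2, hIint η]
  have hQsplit : ∀ η, ∫ ω, Qf η (X ω) * I η ω ∂μ = (∫ ω, Qf η (X ω) ∂μ) * w η := fun η =>
    hsplit η (fun q => Qf η q.1) ((mQf η).comp measurable_fst)
  have hLsplit : ∀ η, ∫ ω, (Lf η (X ω) * ε ω) * I η ω ∂μ = 0 := by
    intro η
    have h := hsplit η (fun q => Lf η q.1 * q.2)
      (((mLf η).comp measurable_fst).mul measurable_snd)
    rw [h]
    have h2 : ∫ ω, Lf η (X ω) * ε ω ∂μ = (∫ ω, Lf η (X ω) ∂μ) * ∫ ω, ε ω ∂μ :=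
      (hεX.comp (mLf η) measurable_id).integral_fun_mul_eq_mul_integral
        ((mLf η).comp hXmeas).aestronglyMeasurable hεm.aestronglyMeasurable
    rw [h2, hε0, mul_zero, zero_mul]
  have hMsplit : ∀ η, ∫ ω, (Mf η (X ω) * ε ω ^ 2) * I η ω ∂μ
      = (∫ ω, Mf η (X ω) * ε ω ^ 2 ∂μ) * w η := fun η =>
    hsplit η (fun q => Mf η q.1 * q.2 ^ 2)
      (((mMf η).comp measurable_fst).mul (measurable_snd.pow_const 2))
  -- the full decomposition of the LHS
  have hdecomp : ∫ ω, ∑ i, (g ω i) ^ 2 ∂μ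
      = ∑ η : Fin d → Bool,
          ((∫ ω, Qf η (X ω) ∂μ) * w η + (∫ ω, Mf η (X ω) * ε ω ^ 2 ∂μ) * w η) := by
    calc ∫ ω, ∑ i, (g ω i) ^ 2 ∂μ
        = ∫ ω, ∑ η : Fin d → Bool,
            (Qf η (X ω) + Lf η (X ω) * ε ω + Mf η (X ω) * ε ω ^ 2) * I η ω ∂μ :=
          integral_congr_ae (ae_of_all _ hsum)
      _ = ∑ η : Fin d → Bool, ∫ ω,
            (Qf η (X ω) + Lf η (X ω) * ε ω + Mf η (X ω) * ε ω ^ 2) * I η ω ∂μ :=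
          integral_finset_sum _ fun η _ =>
            hImul η _ (((hQint η).add (hLεint η)).add (hMε2int η))
      _ = ∑ η : Fin d → Bool,
          ((∫ ω, Qf η (X ω) ∂μ) * w η + (∫ ω, Mf η (X ω) * ε ω ^ 2 ∂μ) * w η) := by
          refine Finset.sum_congr rfl fun η _ => ?_
          have hpt : ∀ ω, (Qf η (X ω) + Lf η (X ω) * ε ω + Mf η (X ω) * ε ω ^ 2) * I η ω
              = (Qf η (X ω) * I η ω + (Lf η (X ω) * ε ω) * I η ω)
                + (Mf η (X ω) * ε ω ^ 2) * I η ω := fun ω => by ring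
          have e1 : Integrable (fun ω => Qf η (X ω) * I η ω) μ := hImul η _ (hQint η)
          have e2 : Integrable (fun ω => (Lf η (X ω) * ε ω) * I η ω) μ :=
            hImul η _ (hLεint η)
          have e3 : Integrable (fun ω => (Mf η (X ω) * ε ω ^ 2) * I η ω) μ :=
            hImul η _ (hMε2int η)
          calc ∫ ω, (Qf η (X ω) + Lf η (X ω) * ε ω + Mf η (X ω) * ε ω ^ 2) * I η ω ∂μ
              = ∫ ω, (Qf η (X ω) * I η ω + (Lf η (X ω) * ε ω) * I η ω)
                  + (Mf η (X ω) * ε ω ^ 2) * I η ω ∂μ :=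
                integral_congr_ae (ae_of_all _ hpt)
            _ = (∫ ω, Qf η (X ω) * I η ω + (Lf η (X ω) * ε ω) * I η ω ∂μ)
                  + ∫ ω, (Mf η (X ω) * ε ω ^ 2) * I η ω ∂μ :=
                integral_add (e1.add e2) e3
            _ = ((∫ ω, Qf η (X ω) * I η ω ∂μ) + ∫ ω, (Lf η (X ω) * ε ω) * I η ω ∂μ)
                  + ∫ ω, (Mf η (X ω) * ε ω ^ 2) * I η ω ∂μ := by
                rw [integral_add e1 e2]
            _ = (∫ ω, Qf η (X ω) ∂μ) * w η + (∫ ω, Mf η (X ω) * ε ω ^ 2 ∂μ) * w η := by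
                rw [hQsplit η, hLsplit η, hMsplit η, add_zero]
  -- bounding the M part
  have hMbound : ∀ η, ∫ ω, Mf η (X ω) * ε ω ^ 2 ∂μ
      ≤ 1 / pm ^ 2 * ∫ ω, ε ω ^ 2 * ‖X ω‖ ^ 2 ∂μ := by
    intro η
    have h1 : ∫ ω, Mf η (X ω) * ε ω ^ 2 ∂μ
        ≤ ∫ ω, 1 / pm ^ 2 * (ε ω ^ 2 * ‖X ω‖ ^ 2) ∂μ := by
      refine integral_mono (hMε2int η) (hfinal2int.const_mul _) fun ω => ?_
      have h2 := mul_le_mul_of_nonneg_right (hMb η (X ω)) (sq_nonneg (ε ω))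
      calc Mf η (X ω) * ε ω ^ 2 ≤ (pm⁻¹ ^ 2 * ‖X ω‖ ^ 2) * ε ω ^ 2 := h2
        _ = 1 / pm ^ 2 * (ε ω ^ 2 * ‖X ω‖ ^ 2) := by
            rw [one_div, ← inv_pow]; ring
    rw [integral_const_mul] at h1
    exact h1
  -- pointwise bound for the Q part
  have hQpt : ∀ x : EuclideanSpace ℝ (Fin d),
      ∑ η : Fin d → Bool, Qf η x * w η
        ≤ (1 - pm) / pm ^ 3 * (‖x‖ ^ 2 * ∑ j, (x j) ^ 2 * (βs j) ^ 2) := by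
    intro x
    set S : ℝ := ∑ j, (x j) ^ 2 * (βs j) ^ 2 with hSdef
    have hS0 : 0 ≤ S := Finset.sum_nonneg fun j _ => mul_nonneg (sq_nonneg _) (sq_nonneg _)
    have step1 : ∑ η : Fin d → Bool, Qf η x * w η
        = ∑ i, ∑ η : Fin d → Bool, w η * ((Cf i η x) ^ 2 * (Tf i η x) ^ 2) := by
      rw [show ∑ η : Fin d → Bool, Qf η x * w η
          = ∑ η : Fin d → Bool, ∑ i, w η * ((Cf i η x) ^ 2 * (Tf i η x) ^ 2) from
        Finset.sum_congr rfl fun η _ => by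
          rw [hQf, Finset.sum_mul]
          exact Finset.sum_congr rfl fun i _ => by ring]
      exact Finset.sum_comm
    have step2 : ∀ i, ∑ η : Fin d → Bool, w η * ((Cf i η x) ^ 2 * (Tf i η x) ^ 2)
        ≤ (pm⁻¹ ^ 2 * (x i) ^ 2) * ((1 - pm) / pm * S) := by
      intro i
      have hA : ∑ η : Fin d → Bool, w η * ((Cf i η x) ^ 2 * (Tf i η x) ^ 2)
          ≤ ∑ η : Fin d → Bool, w η * ((pm⁻¹ ^ 2 * (x i) ^ 2) * (Tf i η x) ^ 2) :=
        Finset.sum_le_sum fun η _ => mul_le_mul_of_nonneg_left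
          (mul_le_mul_of_nonneg_right (hCb i η x) (sq_nonneg _)) (hw0 η)
      have hB' : ∑ η : Fin d → Bool, w η * ((pm⁻¹ ^ 2 * (x i) ^ 2) * (Tf i η x) ^ 2)
          = (pm⁻¹ ^ 2 * (x i) ^ 2) * ∑ η : Fin d → Bool, w η * (Tf i η x) ^ 2 := by
        rw [Finset.mul_sum]
        exact Finset.sum_congr rfl fun η _ => by ring
      have hC2 : ∑ η : Fin d → Bool, w η * (Tf i η x) ^ 2
          = ∑ j ∈ Finset.univ.erase i, ((1 - p j) / p j) * (x j * βs j) ^ 2 := by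
        have h := bern_secmom p hp (fun j => x j * βs j) i
        simpa [hwdef, hTf] using h
      have hD : ∑ j ∈ Finset.univ.erase i, ((1 - p j) / p j) * (x j * βs j) ^ 2
          ≤ (1 - pm) / pm * S := by
        have hterm : ∀ j, ((1 - p j) / p j) * (x j * βs j) ^ 2
            ≤ ((1 - pm) / pm) * ((x j) ^ 2 * (βs j) ^ 2) := by
          intro j
          have hdd : (1 - p j) / p j ≤ (1 - pm) / pm :=
            div_le_div₀ (by linarith [hpm1]) (by linarith [hpm_le j]) hpm_pos (hpm_le j)
          calc ((1 - p j) / p j) * (x j * βs j) ^ 2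
              = ((1 - p j) / p j) * ((x j) ^ 2 * (βs j) ^ 2) := by ring
            _ ≤ ((1 - pm) / pm) * ((x j) ^ 2 * (βs j) ^ 2) :=
              mul_le_mul_of_nonneg_right hdd (by positivity)
        have hnn : (0:ℝ) ≤ (1 - pm) / pm := div_nonneg (by linarith [hpm1]) hpm_pos.le
        calc ∑ j ∈ Finset.univ.erase i, ((1 - p j) / p j) * (x j * βs j) ^ 2
            ≤ ∑ j ∈ Finset.univ.erase i, ((1 - pm) / pm) * ((x j) ^ 2 * (βs j) ^ 2) :=
              Finset.sum_le_sum fun j _ => hterm j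
          _ ≤ ∑ j, ((1 - pm) / pm) * ((x j) ^ 2 * (βs j) ^ 2) :=
              Finset.sum_le_sum_of_subset_of_nonneg (Finset.erase_subset i Finset.univ)
                (fun j _ _ => mul_nonneg hnn (by positivity))
          _ = (1 - pm) / pm * S := by rw [hSdef, ← Finset.mul_sum]
      calc ∑ η : Fin d → Bool, w η * ((Cf i η x) ^ 2 * (Tf i η x) ^ 2)
          ≤ (pm⁻¹ ^ 2 * (x i) ^ 2) * ∑ η : Fin d → Bool, w η * (Tf i η x) ^ 2 :=
            hA.trans hB'.le
        _ ≤ (pm⁻¹ ^ 2 * (x i) ^ 2) * ((1 - pm) / pm * S) := by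
            rw [hC2]
            exact mul_le_mul_of_nonneg_left hD (by positivity)
    calc ∑ η : Fin d → Bool, Qf η x * w η
        = ∑ i, ∑ η : Fin d → Bool, w η * ((Cf i η x) ^ 2 * (Tf i η x) ^ 2) := step1
      _ ≤ ∑ i, (pm⁻¹ ^ 2 * (x i) ^ 2) * ((1 - pm) / pm * S) :=
          Finset.sum_le_sum fun i _ => step2 i
      _ = (∑ i, (x i) ^ 2) * (pm⁻¹ ^ 2 * ((1 - pm) / pm * S)) := by
          rw [Finset.sum_mul]
          exact Finset.sum_congr rfl fun i _ => by ring
      _ = (1 - pm) / pm ^ 3 * (‖x‖ ^ 2 * S) := by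
          rw [← hnorm]
          field_simp
  -- summing the Q part
  have hQsum : ∑ η : Fin d → Bool, (∫ ω, Qf η (X ω) ∂μ) * w η
      ≤ (1 - pm) / pm ^ 3 * ∫ ω, ‖X ω‖ ^ 2 * ∑ j, (X ω j) ^ 2 * (βs j) ^ 2 ∂μ := by
    have h1 : ∑ η : Fin d → Bool, (∫ ω, Qf η (X ω) ∂μ) * w η
        = ∫ ω, ∑ η : Fin d → Bool, Qf η (X ω) * w η ∂μ := by
      rw [integral_finset_sum _ fun η _ => (hQint η).mul_const (w η)]
      exact Finset.sum_congr rfl fun η _ => (integral_mul_const _ _).symm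
    rw [h1]
    have h2 : ∫ ω, ∑ η : Fin d → Bool, Qf η (X ω) * w η ∂μ
        ≤ ∫ ω, (1 - pm) / pm ^ 3 * (‖X ω‖ ^ 2 * ∑ j, (X ω j) ^ 2 * (βs j) ^ 2) ∂μ :=
      integral_mono (integrable_finset_sum _ fun η _ => (hQint η).mul_const _)
        (hB2.const_mul _) fun ω => hQpt (X ω)
    rw [integral_const_mul] at h2
    exact h2
  -- final assembly
  rw [hdecomp, Finset.sum_add_distrib]
  have part2 : ∑ η : Fin d → Bool, (∫ ω, Mf η (X ω) * ε ω ^ 2 ∂μ) * w η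
      ≤ 1 / pm ^ 2 * ∫ ω, ε ω ^ 2 * ‖X ω‖ ^ 2 ∂μ := by
    calc ∑ η : Fin d → Bool, (∫ ω, Mf η (X ω) * ε ω ^ 2 ∂μ) * w η
        ≤ ∑ η : Fin d → Bool, (1 / pm ^ 2 * ∫ ω, ε ω ^ 2 * ‖X ω‖ ^ 2 ∂μ) * w η :=
          Finset.sum_le_sum fun η _ =>
            mul_le_mul_of_nonneg_right (hMbound η) (hw0 η)
      _ = (1 / pm ^ 2 * ∫ ω, ε ω ^ 2 * ‖X ω‖ ^ 2 ∂μ) * ∑ η : Fin d → Bool, w η := by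
          rw [Finset.mul_sum]
      _ = 1 / pm ^ 2 * ∫ ω, ε ω ^ 2 * ‖X ω‖ ^ 2 ∂μ := by rw [hw1, mul_one]
  have part1 : ∑ η : Fin d → Bool, (∫ ω, Qf η (X ω) ∂μ) * w η
      ≤ ((1 - pm) + (1 - pm) ^ 2) / pm ^ 3
        * ∫ ω, ‖X ω‖ ^ 2 * ∑ j, (X ω j) ^ 2 * (βs j) ^ 2 ∂μ := by
    refine hQsum.trans ?_
    have hnn : 0 ≤ ∫ ω, ‖X ω‖ ^ 2 * ∑ j, (X ω j) ^ 2 * (βs j) ^ 2 ∂μ :=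
      integral_nonneg fun ω => mul_nonneg (sq_nonneg _)
        (Finset.sum_nonneg fun j _ => mul_nonneg (sq_nonneg _) (sq_nonneg _))
    refine mul_le_mul_of_nonneg_right ?_ hnn
    exact (div_le_div_iff_of_pos_right (by positivity)).mpr (le_add_of_nonneg_right (sq_nonneg _))
  linarith [part1, part2]
end

section
/- Let d ≥ 1, let x, β ∈ ℝ^d be fixed, and let δ be a random vector in {0,1}^d with independent coordinates δ_j ~ Bernoulli(p_j), p_j ∈ (0,1]. Set P = diag(p_1,…,p_d) and x̃ = x ⊙ δ. Then E_δ[ (I − P) P⁻² diag(x̃ x̃ᵀ) β βᵀ diag(x̃ x̃ᵀ) P⁻² (I − P) ] = (I − P) P⁻¹ diag(x xᵀ) β βᵀ diag(x xᵀ) P⁻¹ (I − P) + (I − P) P⁻² (P − P²) diag(x xᵀ) diag(β βᵀ) diag(x xᵀ) P⁻² (I − P). -/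
lemma sum_prod_bool {d : ℕ} (f : Fin d → Bool → ℝ) :
    ∑ η : Fin d → Bool, ∏ k, f k (η k) = ∏ k, (f k true + f k false) := by
  rw [← Fintype.piFinset_univ, ← Finset.prod_univ_sum]
  exact Finset.prod_congr rfl fun k _ => by simp

lemma sum_mask_two {d : ℕ} (p : Fin d → ℝ) {i j : Fin d} (hij : i ≠ j) (A B : Bool → ℝ) :
    ∑ η : Fin d → Bool, maskWeight p η * A (η i) * B (η j)
      = (p i * A true + (1 - p i) * A false) * (p j * B true + (1 - p j) * B false) := by
  have h1 : ∀ η : Fin d → Bool, maskWeight p η * A (η i) * B (η j)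
      = ∏ k, ((if η k then p k else 1 - p k) *
          ((if k = i then A (η k) else 1) * (if k = j then B (η k) else 1))) := by
    intro η
    rw [Finset.prod_mul_distrib, Finset.prod_mul_distrib, Finset.prod_ite_eq',
      Finset.prod_ite_eq']
    simp [maskWeight, mul_assoc]
  simp only [h1]
  rw [sum_prod_bool (fun k b => (if b then p k else 1 - p k) *
      ((if k = i then A b else 1) * (if k = j then B b else 1)))]
  have h2 : ∀ k : Fin d, ((if (true : Bool) then p k else 1 - p k) *
        ((if k = i then A true else 1) * (if k = j then B true else 1)) +
      (if (false : Bool) then p k else 1 - p k) *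
        ((if k = i then A false else 1) * (if k = j then B false else 1)))
    = (if k = i then p i * A true + (1 - p i) * A false else 1) *
      (if k = j then p j * B true + (1 - p j) * B false else 1) := by
    intro k
    by_cases hi : k = i <;> by_cases hj : k = j <;> subst_eqs <;> simp_all
  rw [Finset.prod_congr rfl (fun k _ => h2 k), Finset.prod_mul_distrib,
    Finset.prod_ite_eq', Finset.prod_ite_eq']
  simp

lemma sum_mask_one {d : ℕ} (p : Fin d → ℝ) (i : Fin d) (A : Bool → ℝ) :
    ∑ η : Fin d → Bool, maskWeight p η * A (η i)
      = p i * A true + (1 - p i) * A false := by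
  have h1 : ∀ η : Fin d → Bool, maskWeight p η * A (η i)
      = ∏ k, ((if η k then p k else 1 - p k) * (if k = i then A (η k) else 1)) := by
    intro η
    rw [Finset.prod_mul_distrib, Finset.prod_ite_eq']
    simp [maskWeight]
  simp only [h1]
  rw [sum_prod_bool (fun k b => (if b then p k else 1 - p k) *
      (if k = i then A b else 1))]
  have h2 : ∀ k : Fin d, ((if (true : Bool) then p k else 1 - p k) *
        (if k = i then A true else 1) +
      (if (false : Bool) then p k else 1 - p k) * (if k = i then A false else 1))
    = (if k = i then p i * A true + (1 - p i) * A false else 1) := by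
    intro k
    by_cases hi : k = i <;> subst_eqs <;> simp_all
  rw [Finset.prod_congr rfl (fun k _ => h2 k), Finset.prod_ite_eq']
  simp

/-- With `x̃ = x ⊙ δ`, `δ_j ~ Bernoulli(p_j)` independent, `p_j ∈ (0,1]`,
and `P = diag(p)`:
`E_δ[(I − P) P⁻² diag(x̃ x̃ᵀ) β βᵀ diag(x̃ x̃ᵀ) P⁻² (I − P)]
  = (I − P) P⁻¹ diag(x xᵀ) β βᵀ diag(x xᵀ) P⁻¹ (I − P)
    + (I − P) P⁻² (P − P²) diag(x xᵀ) diag(β βᵀ) diag(x xᵀ) P⁻² (I − P)`. -/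
theorem stmt_18 (d : ℕ) (hd : 1 ≤ d) (x β : Fin d → ℝ) (p : Fin d → ℝ)
    (hp : ∀ j, 0 < p j ∧ p j ≤ 1) :
    (∑ η : Fin d → Bool, maskWeight p η •
        ((1 - Matrix.diagonal p) * (Matrix.diagonal fun j => (p j)⁻¹) *
          (Matrix.diagonal fun j => (p j)⁻¹) *
          (Matrix.diagonal fun j => (maskedVec x η j) ^ 2) *
          (Matrix.of fun i j => β i * β j) *
          (Matrix.diagonal fun j => (maskedVec x η j) ^ 2) *
          (Matrix.diagonal fun j => (p j)⁻¹) * (Matrix.diagonal fun j => (p j)⁻¹) *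
          (1 - Matrix.diagonal p))) =
      (1 - Matrix.diagonal p) * (Matrix.diagonal fun j => (p j)⁻¹) *
          (Matrix.diagonal fun j => (x j) ^ 2) * (Matrix.of fun i j => β i * β j) *
          (Matrix.diagonal fun j => (x j) ^ 2) * (Matrix.diagonal fun j => (p j)⁻¹) *
          (1 - Matrix.diagonal p) +
        (1 - Matrix.diagonal p) * (Matrix.diagonal fun j => (p j)⁻¹) *
          (Matrix.diagonal fun j => (p j)⁻¹) *
          (Matrix.diagonal p - Matrix.diagonal p * Matrix.diagonal p) *
          (Matrix.diagonal fun j => (x j) ^ 2) * (Matrix.diagonal fun j => (β j) ^ 2) *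
          (Matrix.diagonal fun j => (x j) ^ 2) *
          (Matrix.diagonal fun j => (p j)⁻¹) * (Matrix.diagonal fun j => (p j)⁻¹) *
          (1 - Matrix.diagonal p) := by
  have hne : ∀ k, p k ≠ 0 := fun k => (hp k).1.ne'
  have h1 : (1 : Matrix (Fin d) (Fin d) ℝ) - Matrix.diagonal p
      = Matrix.diagonal (fun k => 1 - p k) := by
    rw [← Matrix.diagonal_one, Matrix.diagonal_sub]
  have h2 : Matrix.diagonal p - Matrix.diagonal p * Matrix.diagonal p
      = Matrix.diagonal (fun k => p k - p k * p k) := by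
    rw [Matrix.diagonal_mul_diagonal, Matrix.diagonal_sub]
  ext i j
  rw [Matrix.sum_apply]
  have hent : ∀ η : Fin d → Bool, (maskWeight p η •
        ((1 - Matrix.diagonal p) * (Matrix.diagonal fun j => (p j)⁻¹) *
          (Matrix.diagonal fun j => (p j)⁻¹) *
          (Matrix.diagonal fun j => (maskedVec x η j) ^ 2) *
          (Matrix.of fun i j => β i * β j) *
          (Matrix.diagonal fun j => (maskedVec x η j) ^ 2) *
          (Matrix.diagonal fun j => (p j)⁻¹) * (Matrix.diagonal fun j => (p j)⁻¹) *
          (1 - Matrix.diagonal p))) i j =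
      ((1 - p i) * (p i)⁻¹ * (p i)⁻¹ * (β i * β j) * (p j)⁻¹ * (p j)⁻¹ * (1 - p j)) *
        (maskWeight p η * (x i * (if η i then 1 else 0)) ^ 2 *
          (x j * (if η j then 1 else 0)) ^ 2) := by
    intro η
    simp only [h1, Matrix.diagonal_mul_diagonal, Matrix.smul_apply, Matrix.mul_diagonal,
      Matrix.diagonal_mul, Matrix.of_apply, smul_eq_mul, maskedVec]
    ring
  simp only [hent]
  rw [← Finset.mul_sum]
  by_cases hij : i = j
  · subst hij
    simp only [mul_assoc (maskWeight p _)]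
    rw [sum_mask_one p i (fun b => (x i * (if b then (1:ℝ) else 0)) ^ 2 *
      (x i * (if b then (1:ℝ) else 0)) ^ 2)]
    simp only [h1, h2, Matrix.add_apply, Matrix.diagonal_mul_diagonal, Matrix.mul_diagonal,
      Matrix.diagonal_mul, Matrix.of_apply, Matrix.diagonal_apply, if_pos rfl, Matrix.sub_apply, eq_self_iff_true, Bool.false_eq_true, if_true, if_false]
    have hi : p i ≠ 0 := hne i
    field_simp
    ring
  · rw [sum_mask_two p hij (fun b => (x i * (if b then (1:ℝ) else 0)) ^ 2)
      (fun b => (x j * (if b then (1:ℝ) else 0)) ^ 2)]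
    simp only [h1, h2, Matrix.add_apply, Matrix.diagonal_mul_diagonal, Matrix.mul_diagonal,
      Matrix.diagonal_mul, Matrix.of_apply, Matrix.diagonal_apply, if_neg hij, Matrix.sub_apply, eq_self_iff_true, Bool.false_eq_true, if_true, if_false]
    have hi : p i ≠ 0 := hne i
    have hj : p j ≠ 0 := hne j
    field_simp
    ring
end
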